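/- arXiv:1304.6538 — 7 statements merged into one kernel-verified Lean document; each statement's English description precedes it below -/
import Mathlib

section
/- For the sequence of square matrices A_n of size 2^(n-1), indexed by compositions of n in reverse lexicographic order, defined by A_n(I,J) = (∏_{k ∈ 𝒜(Ī,J̄)} t_k)·(∏_{l ∈ 𝒜(Ī~,J̄~)} q_l), one has the block recursion A_n = [[B_{n-1}, A_{n-1}T_{n-1}],[q_1 B_{n-1}, A_{n-1}]], where B_{n-1} is obtained from A_{n-1} by substituting q_{i+1} for each q_i, and T_{n-1} = diag(t_{ℓ(I)}). -/
/-! Compositions of `n` are encoded by their descent sets, i.e. by boolean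
words `u : Fin (n-1) → Bool`, where `u j = true` iff `j+1` is a descent of the
composition.  In the reverse lexicographic order used in the paper, the block
split of the matrix `A_n` corresponds to splitting on the first letter of the
word (whether `1` is a descent or not), i.e. on `Fin.cons b u`. -/

/-- The (increasingly sorted) list of descents of the composition of `n = m+1`
encoded by the boolean word `v : Fin m → Bool`. -/
def desList {m : ℕ} (v : Fin m → Bool) : List ℕ :=
  ((List.finRange m).filter (fun j => v j)).map (fun j => (j : ℕ) + 1)

/-- `𝒜(I,J) = {k < ℓ(J) : j_1 + ⋯ + j_k ∉ Des(I)}` for the compositions `I, J`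
encoded by the words `u, v`: the `k`-th partial sum of `J` is the `k`-th
smallest descent of `J`. -/
def AAset {m : ℕ} (u v : Fin m → Bool) : Finset ℕ :=
  (Finset.Icc 1 (desList v).length).filter
    (fun k => (desList v).getD (k-1) 0 ∉ desList u)

/-- The mirror image `Ī`: `Des(Ī) = {n - d : d ∈ Des(I)}`, i.e. the reversed
boolean word. -/
def mirW {m : ℕ} (u : Fin m → Bool) : Fin m → Bool := fun j => u j.rev

/-- The conjugate of the mirror image, `Ī∼`, whose descent set is the
complement of `Des(I)` in `[n-1]`: the complemented boolean word. -/
def cmplW {m : ℕ} (u : Fin m → Bool) : Fin m → Bool := fun j => ! u j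

lemma coeM_list {m : ℕ} (l : List (Fin m)) :
    (do let a ← l; pure ((a : ℕ)) : List ℕ) = l.map Fin.val := by
  show List.flatMap (fun (a : Fin m) => [(a : ℕ)]) l = l.map Fin.val
  induction l with
  | nil => rfl
  | cons a l ih => simp_all

lemma desList_eq {m : ℕ} (v : Fin m → Bool) :
    desList v = ((List.finRange m).filter (fun j => v j)).map (fun j => j.val + 1) := by
  unfold desList
  rw [coeM_list, List.map_map]
  rfl

lemma desList_pos {m : ℕ} {v : Fin m → Bool} {x : ℕ} (hx : x ∈ desList v) : 1 ≤ x := by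
  rw [desList_eq, List.mem_map] at hx
  obtain ⟨j, _, rfl⟩ := hx; omega

lemma desList_le {m : ℕ} {v : Fin m → Bool} {x : ℕ} (hx : x ∈ desList v) : x ≤ m := by
  rw [desList_eq, List.mem_map] at hx
  obtain ⟨j, _, rfl⟩ := hx; exact j.isLt

lemma getD_mem {l : List ℕ} {i : ℕ} (h : i < l.length) : l.getD i 0 ∈ l := by
  rw [List.getD_eq_getElem l 0 h]; exact List.getElem_mem h

lemma desList_cons {m : ℕ} (c : Bool) (v : Fin m → Bool) :
    desList (Fin.cons c v) = (if c then [1] else []) ++ (desList v).map (· + 1) := by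
  rw [desList_eq, desList_eq, List.finRange_succ, List.filter_cons, List.filter_map]
  cases c <;> simp [Function.comp_def, List.map_map]

lemma desList_snoc {m : ℕ} (c : Bool) (v : Fin m → Bool) :
    desList (Fin.snoc v c) = desList v ++ (if c then [m+1] else []) := by
  rw [desList_eq, desList_eq, List.finRange_succ_last, List.filter_append, List.filter_map]
  cases c <;> simp [Function.comp_def, List.map_map]

lemma mirW_cons {m : ℕ} (b : Bool) (u : Fin m → Bool) :
    mirW (Fin.cons b u) = Fin.snoc (mirW u) b := by
  funext j
  induction j using Fin.lastCases with
  | last => simp [mirW, Fin.rev_last]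
  | cast i => simp [mirW, Fin.rev_castSucc]

lemma cmplW_cons {m : ℕ} (b : Bool) (u : Fin m → Bool) :
    cmplW (Fin.cons b u) = Fin.cons (!b) (cmplW u) := by
  funext j
  induction j using Fin.cases with
  | zero => simp [cmplW]
  | succ i => simp [cmplW]

lemma mem_AAset {m : ℕ} {u v : Fin m → Bool} {k : ℕ} :
    k ∈ AAset u v ↔
      (1 ≤ k ∧ k ≤ (desList v).length) ∧ (desList v).getD (k-1) 0 ∉ desList u := by
  simp [AAset, Finset.mem_filter, Finset.mem_Icc]

lemma AAset_le {m : ℕ} {u v : Fin m → Bool} {k : ℕ} (h : k ∈ AAset u v) :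
    1 ≤ k ∧ k ≤ (desList v).length := (mem_AAset.1 h).1

lemma length_desList_mirW {m : ℕ} (v : Fin m → Bool) :
    (desList (mirW v)).length = (desList v).length := by
  rw [desList_eq, desList_eq]
  simp only [List.length_map]
  have h := List.filter_map (f := Fin.rev) (p := fun j => v j) (l := List.finRange m)
  have h2 : (List.finRange m).map Fin.rev = (List.finRange m).reverse :=
    (List.finRange_reverse (n := m)).symm
  rw [h2, List.filter_reverse] at h
  have := congrArg List.length h
  simp only [List.length_reverse, List.length_map] at this
  simpa [mirW, Function.comp_def] using this.symm

lemma notmem_snocDes {m : ℕ} {U : Fin m → Bool} (b : Bool) {d : ℕ} (hd : d ≤ m) :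
    d ∉ desList (Fin.snoc U b) ↔ d ∉ desList U := by
  rw [desList_snoc]
  have hne : d ≠ m + 1 := by omega
  cases b <;> simp [hne]

lemma AAset_snoc {m : ℕ} (U V : Fin m → Bool) (b c : Bool) :
    AAset (Fin.snoc U b) (Fin.snoc V c) =
      if c = true ∧ b = false then insert ((desList V).length + 1) (AAset U V)
      else AAset U V := by
  ext k
  by_cases hk : 1 ≤ k ∧ k ≤ (desList V).length
  · have hlt : k - 1 < (desList V).length := by omega
    have hd : (desList V).getD (k-1) 0 ∈ desList V := getD_mem hlt
    have hdm : (desList V).getD (k-1) 0 ≤ m := desList_le hd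
    have hL : k ≤ (desList (Fin.snoc V c)).length := by
      rw [desList_snoc]; cases c <;> simp <;> omega
    have hgetD : (desList (Fin.snoc V c)).getD (k-1) 0 = (desList V).getD (k-1) 0 := by
      rw [desList_snoc, List.getD_append _ _ _ _ hlt]
    have h1 : k ∈ AAset (Fin.snoc U b) (Fin.snoc V c) ↔ k ∈ AAset U V := by
      rw [mem_AAset, mem_AAset, hgetD, notmem_snocDes b hdm]
      simp [hk.1, hk.2, hL]
    have hne : k ≠ (desList V).length + 1 := by omega
    split <;> simp [h1, hne, Finset.mem_insert]
  · have h2 : k ∉ AAset U V := by rw [mem_AAset]; tauto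
    by_cases hk1 : k = (desList V).length + 1
    · subst hk1
      have hm1 : m + 1 ∉ desList U := fun h => by have := desList_le h; omega
      have hLHS : ((desList V).length + 1) ∈ AAset (Fin.snoc U b) (Fin.snoc V c) ↔
          (c = true ∧ b = false) := by
        rw [mem_AAset, desList_snoc, desList_snoc]
        cases c <;> cases b <;>
          simp [List.getD_append_right _ _ _ _ (by omega : (desList V).length ≤
            (desList V).length + 1 - 1), hm1] <;> omega
      split <;> simp_all
    · have h3 : k ∉ AAset (Fin.snoc U b) (Fin.snoc V c) := by
        rw [mem_AAset, desList_snoc]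
        cases c <;> simp <;> omega
      split <;> simp [h2, h3, hk1, Finset.mem_insert]

lemma mem_consDes {m : ℕ} (b' : Bool) (u' : Fin m → Bool) {d : ℕ} (hd : 1 ≤ d) :
    d + 1 ∈ desList (Fin.cons b' u') ↔ d ∈ desList u' := by
  rw [desList_cons]
  have h1 : d + 1 ≠ 1 := by omega
  cases b' <;> simp [h1] <;> omega

lemma AAset_cons_false {m : ℕ} (b' : Bool) (u' v' : Fin m → Bool) :
    AAset (Fin.cons b' u') (Fin.cons false v') = AAset u' v' := by
  ext k
  rw [mem_AAset, mem_AAset, desList_cons]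
  simp only [Bool.false_eq_true, if_false, List.nil_append, List.length_map]
  by_cases hk : 1 ≤ k ∧ k ≤ (desList v').length
  · have hlt : k - 1 < (desList v').length := by omega
    have hd : (desList v').getD (k-1) 0 ∈ desList v' := getD_mem hlt
    have hd1 : 1 ≤ (desList v').getD (k-1) 0 := desList_pos hd
    have hget : ((desList v').map (· + 1)).getD (k-1) 0 = (desList v').getD (k-1) 0 + 1 := by
      rw [List.getD_eq_getElem _ _ (by simpa using hlt), List.getD_eq_getElem _ _ hlt]
      simp
    rw [hget, mem_consDes b' u' hd1]
  · tauto

lemma AAset_cons_true {m : ℕ} (b' : Bool) (u' v' : Fin m → Bool) :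
    AAset (Fin.cons b' u') (Fin.cons true v') =
      (if b' then ∅ else {1}) ∪ (AAset u' v').image (· + 1) := by
  ext k
  rw [mem_AAset, desList_cons]
  simp only [if_true, List.singleton_append, List.length_cons, List.length_map,
    Finset.mem_union, Finset.mem_image]
  have hone : (1 : ℕ) ∉ ((desList u').map (· + 1)) := by
    intro h
    rw [List.mem_map] at h
    obtain ⟨a, ha, ha1⟩ := h
    have := desList_pos ha; omega
  rcases Nat.lt_or_ge k 2 with hk2 | hk2
  · rcases Nat.lt_or_ge k 1 with hk0 | hk1
    · interval_cases k
      constructor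
      · rintro ⟨⟨h, -⟩, -⟩; omega
      · rintro (h | ⟨a, ha, ha1⟩)
        · split at h <;> simp_all
        · omega
    · have hk : k = 1 := by omega
      subst hk
      have hget : ((1 : ℕ) :: (desList v').map (· + 1)).getD 0 0 = 1 := rfl
      simp only [Nat.sub_self, hget]
      rw [desList_cons]
      constructor
      · rintro ⟨-, hnot⟩
        cases b' with
        | false =>
          left; simp
        | true => exact absurd (by simp) hnot
      · intro h
        refine ⟨by omega, ?_⟩
        cases b' with
        | false =>
          simpa using hone
        | true =>
          rcases h with h | ⟨a, ha, ha1⟩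
          · simp at h
          · have := AAset_le ha; omega
  · -- k ≥ 2
    have hget : ∀ hlt : k - 2 < (desList v').length,
        ((1 : ℕ) :: (desList v').map (· + 1)).getD (k-1) 0 = (desList v').getD (k-2) 0 + 1 := by
      intro hlt
      have : k - 1 = (k - 2) + 1 := by omega
      rw [this]
      show ((desList v').map (· + 1)).getD (k-2) 0 = _
      rw [List.getD_eq_getElem _ _ (by simpa using hlt), List.getD_eq_getElem _ _ hlt]
      simp
    constructor
    · rintro ⟨⟨-, hkle⟩, hnot⟩
      right
      refine ⟨k - 1, ?_, by omega⟩
      rw [mem_AAset]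
      have hlt : k - 2 < (desList v').length := by omega
      rw [hget hlt] at hnot
      have hd : (desList v').getD (k-2) 0 ∈ desList v' := getD_mem hlt
      have hd1 : 1 ≤ (desList v').getD (k-2) 0 := desList_pos hd
      have heq : k - 1 - 1 = k - 2 := by omega
      refine ⟨⟨by omega, by omega⟩, ?_⟩
      rw [heq, ← mem_consDes b' u' hd1]
      exact hnot
    · rintro (h | ⟨a, ha, ha1⟩)
      · have hk1 : k = 1 := by
          split at h
          · simp at h
          · simpa using h
        omega
      · rw [mem_AAset] at ha
        obtain ⟨⟨ha1', ha2⟩, hnot⟩ := ha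
        have hk : k = a + 1 := ha1.symm
        subst hk
        have hlt : a + 1 - 2 < (desList v').length := by omega
        refine ⟨⟨by omega, by omega⟩, ?_⟩
        rw [hget hlt]
        have h21 : a + 1 - 2 = a - 1 := by omega
        rw [h21]
        have hd : (desList v').getD (a-1) 0 ∈ desList v' := getD_mem (by omega)
        rw [mem_consDes b' u' (desList_pos hd)]
        exact hnot

/-- The entry `A_n(I,J) = (∏_{k ∈ 𝒜(Ī,J̄)} t_k) · (∏_{l ∈ 𝒜(Ī∼,J̄∼)} q_l)` of
the matrix `A_n` (here `n = m+1`, rows and columns indexed by boolean words). -/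
def matA {R : Type*} [CommRing R] (q t : ℕ → R) {m : ℕ} (u v : Fin m → Bool) : R :=
  (∏ k ∈ AAset (mirW u) (mirW v), t k) * (∏ l ∈ AAset (cmplW u) (cmplW v), q l)

lemma prod_image_add_one {R : Type*} [CommRing R] (f : ℕ → R) (S : Finset ℕ) :
    ∏ k ∈ S.image (· + 1), f k = ∏ k ∈ S, f (k + 1) :=
  Finset.prod_image (fun x _ y _ h => by omega)

lemma one_not_mem_image {m : ℕ} (u v : Fin m → Bool) :
    (1:ℕ) ∉ (AAset u v).image (· + 1) := by
  simp only [Finset.mem_image]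
  rintro ⟨a, ha, h⟩
  have := AAset_le ha; omega

lemma notmem_AAset_top {m : ℕ} (u v : Fin m → Bool) :
    (desList v).length + 1 ∉ AAset u v := fun h => by have := AAset_le h; omega

/-- the block recursion
`A_n = [[B_{n-1}, A_{n-1}T_{n-1}],[q_1 B_{n-1}, A_{n-1}]]`, where `B_{n-1}` is
`A_{n-1}` with `q_i ↦ q_{i+1}` and `T_{n-1} = diag(t_{ℓ(I)})`.  The four blocks
correspond to the four values of the first letters `b, c` of the two words. -/
theorem stmt_0 {R : Type*} [CommRing R] (m : ℕ) (q t : ℕ → R)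
    (b c : Bool) (u v : Fin m → Bool) :
    matA q t (Fin.cons b u) (Fin.cons c v) =
      match b, c with
      | false, false => matA (fun i => q (i+1)) t u v
      | false, true  => matA q t u v * t ((desList v).length + 1)
      | true , false => q 1 * matA (fun i => q (i+1)) t u v
      | true , true  => matA q t u v := by
  rw [matA, mirW_cons, mirW_cons, cmplW_cons, cmplW_cons, AAset_snoc]
  cases b <;> cases c
  · -- b = false, c = false
    rw [if_neg (by simp), Bool.not_false, AAset_cons_true, if_pos rfl,
      Finset.empty_union, prod_image_add_one]
    rfl
  · -- b = false, c = true
    rw [if_pos (by simp), Bool.not_false, Bool.not_true, AAset_cons_false,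
      Finset.prod_insert (notmem_AAset_top (mirW u) (mirW v)), length_desList_mirW]
    simp only [matA]
    ring
  · -- b = true, c = false
    rw [if_neg (by simp), Bool.not_true, Bool.not_false, AAset_cons_true, if_neg (by simp),
      Finset.prod_union (Finset.disjoint_singleton_left.2 (one_not_mem_image _ _)),
      Finset.prod_singleton, prod_image_add_one]
    simp only [matA]
    ring
  · -- b = true, c = true
    rw [if_neg (by simp), Bool.not_true, AAset_cons_false]
    rfl
end

section
/- The elements 𝒮^I(t;A) := ∑_{J ≤ I} ℛ_J(t;A) form a multiplicative basis: 𝒮^I(t)·𝒮^J(t) = 𝒮^{IJ}(t) for all compositions I, J, where IJ denotes concatenation. Equivalently, the ℛ basis satisfies the ribbon-like product rule ℛ_I ℛ_J = ℛ_{I▷J} + ℛ_{IJ}. -/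
open scoped BigOperators

/-- The descent set of a composition `I` of `n`: the partial sums
`i_1 + ⋯ + i_k` for `1 ≤ k ≤ ℓ(I) - 1`. -/
def desSet {n : ℕ} (I : Composition n) : Finset ℕ :=
  ((List.range (I.length - 1)).map (fun k => (I.blocks.take (k+1)).sum)).toFinset

/-- `𝒜(I,J) = {k < ℓ(J) : j_1 + ⋯ + j_k ∉ Des(I)}`. -/
def AAcomp {n : ℕ} (I J : Composition n) : Finset ℕ :=
  (Finset.Icc 1 (J.length - 1)).filter (fun k => (J.blocks.take k).sum ∉ desSet I)

/-- The `k`-th part (1-indexed) of a composition. -/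
def part {n : ℕ} (J : Composition n) (k : ℕ) : ℕ := J.blocks.getD (k-1) 0

/-- `Sym`, the algebra of noncommutative symmetric functions, realized as the
free associative algebra on the complete functions `S_1, S_2, …`;
`Sgen n` is the generator `S_n`. -/
noncomputable def Sgen (R : Type*) [CommRing R] (n : ℕ) : FreeAlgebra R ℕ :=
  FreeAlgebra.ι R n

/-- `S^J = S_{j_1} ⋯ S_{j_r}` for a list of parts `J`. -/
noncomputable def SJ (R : Type*) [CommRing R] (J : List ℕ) : FreeAlgebra R ℕ :=
  (J.map (Sgen R)).prod

/-- The multiparameter analogue `ℛ_I(t; A)` of the `(1-t)`-transformed ribbon: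
`ℛ_I = (-1)^{ℓ(I)} ∑_{J ⊨ n} (-1)^{ℓ(J)} (1 - t_{j_r}) (∏_{k ∈ 𝒜(I,J)} t_{j_k}) S^J`. -/
noncomputable def Rr {R : Type*} [CommRing R] (t : ℕ → R) {n : ℕ} (I : Composition n) :
    FreeAlgebra R ℕ :=
  ∑ J : Composition n,
    ((-1 : R) ^ I.length * (-1 : R) ^ J.length
        * (1 - t (part J J.length)) * ∏ k ∈ AAcomp I J, t (part J k)) • SJ R J.blocks

/-- `𝒮^I(t) = ∑_{J ≤ I} ℛ_J(t)`, the sum over compositions `J` coarser than `I`. -/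
noncomputable def Ss {R : Type*} [CommRing R] (t : ℕ → R) {n : ℕ} (I : Composition n) :
    FreeAlgebra R ℕ :=
  ∑ J ∈ Finset.univ.filter (fun J : Composition n => desSet J ⊆ desSet I), Rr t J

/-- Concatenation `IJ` of compositions. -/
def concatComp {m n : ℕ} (I : Composition m) (J : Composition n) : Composition (m+n) :=
  ⟨I.blocks ++ J.blocks,
   fun hi => by
      rcases List.mem_append.mp hi with h | h
      · exact I.blocks_pos h
      · exact J.blocks_pos h,
   by rw [List.sum_append, I.blocks_sum, J.blocks_sum]⟩

/-- Near-concatenation `I ▷ J = (i_1, …, i_{r-1}, i_r + j_1, j_2, …, j_s)`. -/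
def nearConcat {m n : ℕ} (hm : 0 < m) (hn : 0 < n)
    (I : Composition m) (J : Composition n) : Composition (m+n) := by
  have hI : I.blocks ≠ [] := by
    intro h
    rw [← I.blocks_sum, h] at hm
    exact absurd hm (by simp)
  have hJ : J.blocks ≠ [] := by
    intro h
    rw [← J.blocks_sum, h] at hn
    exact absurd hn (by simp)
  refine ⟨I.blocks.dropLast ++ (I.blocks.getLast hI + J.blocks.head hJ) :: J.blocks.tail,
    ?_, ?_⟩
  · intro i hi
    rcases List.mem_append.mp hi with h | h
    · exact I.blocks_pos (List.dropLast_subset _ h)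
    · rcases List.mem_cons.mp h with h | h
      · subst h
        exact Nat.add_pos_left (I.blocks_pos (List.getLast_mem hI)) _
      · exact J.blocks_pos (List.mem_of_mem_tail h)
  · have h1 := congrArg List.sum (List.dropLast_append_getLast hI)
    have h2 := congrArg List.sum (List.cons_head_tail (l := J.blocks) hJ)
    rw [I.blocks_sum] at h1
    rw [J.blocks_sum] at h2
    simp only [List.sum_append, List.sum_cons, List.sum_nil, add_zero] at h1 h2
    rw [List.sum_append, List.sum_cons]
    omega

section Lemmas

open Finset

namespace NSym

lemma sum_pos_of_ne_nil {l : List ℕ} (hpos : ∀ x ∈ l, 0 < x) (h : l ≠ []) : 0 < l.sum := by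
  cases l with
  | nil => exact absurd rfl h
  | cons a l => have := hpos a (by simp); simp [List.sum_cons]; omega

lemma eq_nil_of_sum_eq_zero {l : List ℕ} (hpos : ∀ x ∈ l, 0 < x) (h : l.sum = 0) : l = [] := by
  by_contra hne
  have := sum_pos_of_ne_nil hpos hne; omega

lemma append_cancel_of_sum_eq {l1 l2 l1' l2' : List ℕ} (hpos : ∀ x ∈ l1, 0 < x)
    (hpos' : ∀ x ∈ l1', 0 < x) (h : l1 ++ l2 = l1' ++ l2') (hs : l1.sum = l1'.sum) :
    l1 = l1' ∧ l2 = l2' := by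
  rcases List.append_eq_append_iff.mp h with ⟨a, ha1, ha2⟩ | ⟨c, hc1, hc2⟩
  · have : a.sum = 0 := by
      have := congrArg List.sum ha1; simp [List.sum_append] at this; omega
    have ha : a = [] := eq_nil_of_sum_eq_zero (fun x hx => hpos' x (ha1 ▸ List.mem_append_right _ hx)) this
    subst ha; simp at ha1 ha2 ⊢; exact ⟨ha1.symm, ha2⟩
  · have : c.sum = 0 := by
      have := congrArg List.sum hc1; simp [List.sum_append] at this; omega
    have hc : c = [] := eq_nil_of_sum_eq_zero (fun x hx => hpos x (hc1 ▸ List.mem_append_right _ hx)) this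
    subst hc; simp at hc1 hc2 ⊢; exact ⟨hc1, hc2.symm⟩

lemma straddle : ∀ (l : List ℕ) (m : ℕ), (∀ x ∈ l, 0 < x) → m < l.sum →
    (∀ k, (l.take k).sum ≠ m) →
    ∃ l1 x l2, l = l1 ++ x :: l2 ∧ l1.sum < m ∧ m < l1.sum + x := by
  intro l
  induction l with
  | nil => intro m _ hm _; simp at hm
  | cons a l ih =>
    intro m hpos hm hk
    have hm0 : 0 < m := by have := hk 0; simp at this; omega
    by_cases hma : m < a
    · exact ⟨[], a, l, rfl, by simpa, by simpa⟩
    · have hne : a ≠ m := by have := hk 1; simpa using this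
      have ha : a < m := by omega
      have hsum : m - a < l.sum := by simp [List.sum_cons] at hm; omega
      obtain ⟨l1, x, l2, h1, h2, h3⟩ := ih (m - a) (fun x hx => hpos x (by simp [hx]))
        hsum (by
          intro k
          have := hk (k + 1)
          simp [List.sum_cons] at this
          omega)
      exact ⟨a :: l1, x, l2, by simp [h1], by simp; omega, by simp; omega⟩

lemma straddle_unique {l1 l1' l2 l2' : List ℕ} {x x' m : ℕ}
    (h : l1 ++ x :: l2 = l1' ++ x' :: l2')
    (hs : l1.sum < m) (hs2 : m < l1.sum + x) (hs' : l1'.sum < m) (hs2' : m < l1'.sum + x') :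
    l1 = l1' ∧ x = x' ∧ l2 = l2' := by
  rcases List.append_eq_append_iff.mp h with ⟨a, ha1, ha2⟩ | ⟨c, hc1, hc2⟩
  · cases a with
    | nil => simp at ha1 ha2 ⊢; exact ⟨ha1.symm, ha2.1, ha2.2⟩
    | cons y a' =>
      exfalso
      have hy : y = x := by have := ha2; simp at this; exact this.1.symm
      have := congrArg List.sum ha1
      simp [List.sum_append, hy] at this
      omega
  · cases c with
    | nil => simp at hc1 hc2 ⊢; exact ⟨hc1, hc2.1.symm, hc2.2.symm⟩
    | cons y c' =>
      exfalso
      have hy : y = x' := by have := hc2; simp at this; exact this.1.symm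
      have := congrArg List.sum hc1
      simp [List.sum_append, hy] at this
      omega

/-! ### Composition basics -/

lemma blocks_ne_nil {n : ℕ} (hn : 0 < n) (I : Composition n) : I.blocks ≠ [] := by
  intro h
  rw [← I.blocks_sum, h] at hn
  simp at hn

lemma length_pos {n : ℕ} (hn : 0 < n) (I : Composition n) : 0 < I.length := by
  have := blocks_ne_nil hn I
  simpa [Composition.length] using List.length_pos_iff.mpr this

lemma mem_desSet {n : ℕ} {M : Composition n} {x : ℕ} :
    x ∈ desSet M ↔ ∃ k, 1 ≤ k ∧ k ≤ M.length - 1 ∧ (M.blocks.take k).sum = x := by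
  simp only [desSet, List.mem_toFinset, List.mem_map, List.mem_range]
  constructor
  · rintro ⟨k, hk, rfl⟩; exact ⟨k + 1, by omega, by omega, rfl⟩
  · rintro ⟨k, h1, h2, rfl⟩
    refine ⟨k - 1, by omega, ?_⟩
    congr 2
    omega

lemma take_sum_pos {n : ℕ} (M : Composition n) {k : ℕ} (h1 : 1 ≤ k) (h2 : k ≤ M.length) :
    0 < (M.blocks.take k).sum := by
  apply sum_pos_of_ne_nil (fun x hx => M.blocks_pos (List.take_subset _ _ hx))
  have : M.blocks ≠ [] := by
    intro h
    rw [Composition.length, h] at h2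
    simp at h2
    omega
  simp [List.take_eq_nil_iff]
  constructor <;> [omega; simpa using this]

lemma take_sum_lt {n : ℕ} (M : Composition n) {k : ℕ} (h : k < M.length) :
    (M.blocks.take k).sum < n := by
  have hsplit : (M.blocks.take k).sum + (M.blocks.drop k).sum = n := by
    rw [← List.sum_append, List.take_append_drop, M.blocks_sum]
  have hd : M.blocks.drop k ≠ [] := by
    simp [List.drop_eq_nil_iff]
    rw [Composition.length] at h
    omega
  have := sum_pos_of_ne_nil (fun x hx => M.blocks_pos (List.drop_subset _ _ hx)) hd
  omega

lemma desSet_pos {n : ℕ} {M : Composition n} {x : ℕ} (h : x ∈ desSet M) : 0 < x ∧ x < n := by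
  obtain ⟨k, h1, h2, rfl⟩ := mem_desSet.mp h
  have hl : 1 ≤ M.length := by omega
  exact ⟨take_sum_pos M h1 (by omega), take_sum_lt M (by omega)⟩

end NSym
end Lemmas
namespace NSym
open Finset

variable {m n : ℕ}

lemma concat_blocks (I : Composition m) (J : Composition n) :
    (concatComp I J).blocks = I.blocks ++ J.blocks := rfl

lemma concat_length (I : Composition m) (J : Composition n) :
    (concatComp I J).length = I.length + J.length := by
  simp [Composition.length, concat_blocks]

lemma near_blocks (hm : 0 < m) (hn : 0 < n) (I : Composition m) (J : Composition n) :
    (nearConcat hm hn I J).blocks =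
      I.blocks.dropLast ++ (I.blocks.getLast (blocks_ne_nil hm I) +
        J.blocks.head (blocks_ne_nil hn J)) :: J.blocks.tail := rfl

lemma near_length (hm : 0 < m) (hn : 0 < n) (I : Composition m) (J : Composition n) :
    (nearConcat hm hn I J).length = I.length + J.length - 1 := by
  have h1 := length_pos hm I
  have h2 := length_pos hn J
  simp only [Composition.length, near_blocks, List.length_append, List.length_dropLast,
    List.length_cons, List.length_tail]
  simp only [Composition.length] at h1 h2 ⊢
  omega

lemma concat_take_sum_left (I : Composition m) (J : Composition n) {k : ℕ} (hk : k ≤ I.length) :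
    ((concatComp I J).blocks.take k).sum = (I.blocks.take k).sum := by
  rw [concat_blocks, List.take_append, List.sum_append]
  have : k - I.blocks.length = 0 := by rw [Composition.length] at hk; omega
  rw [this]
  simp

lemma concat_take_sum_right (I : Composition m) (J : Composition n) (j : ℕ) :
    ((concatComp I J).blocks.take (I.length + j)).sum = m + (J.blocks.take j).sum := by
  rw [concat_blocks, List.take_append, List.sum_append]
  rw [List.take_of_length_le (by rw [Composition.length]; omega), I.blocks_sum]
  have h : I.length + j - I.blocks.length = j := by rw [Composition.blocks_length]; omega
  rw [h]

lemma near_take_sum_left (hm : 0 < m) (hn : 0 < n) (I : Composition m) (J : Composition n)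
    {k : ℕ} (hk : k ≤ I.length - 1) :
    ((nearConcat hm hn I J).blocks.take k).sum = (I.blocks.take k).sum := by
  rw [near_blocks, List.take_append, List.sum_append]
  have hlen : I.blocks.dropLast.length = I.length - 1 := by
    simp [Composition.length]
  have h0 : k - I.blocks.dropLast.length = 0 := by omega
  rw [h0]
  simp only [List.take_zero, List.sum_nil, add_zero]
  rw [List.dropLast_eq_take, List.take_take]
  congr 2
  simp only [Composition.length] at hk ⊢
  omega

lemma near_take_sum_right (hm : 0 < m) (hn : 0 < n) (I : Composition m) (J : Composition n)
    {j : ℕ} (hj : 1 ≤ j) :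
    ((nearConcat hm hn I J).blocks.take (I.length - 1 + j)).sum = m + (J.blocks.take j).sum := by
  obtain ⟨j', rfl⟩ : ∃ j', j = j' + 1 := ⟨j - 1, by omega⟩
  have hlen : I.blocks.dropLast.length = I.length - 1 := by simp [Composition.length]
  rw [near_blocks, List.take_append, List.sum_append]
  rw [List.take_of_length_le (by omega)]
  have h1 : I.length - 1 + (j' + 1) - I.blocks.dropLast.length = j' + 1 := by omega
  rw [h1, List.take_succ_cons, List.sum_cons]
  have h2 : I.blocks.dropLast.sum + I.blocks.getLast (blocks_ne_nil hm I) = m := by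
    have := congrArg List.sum (I.blocks.dropLast_append_getLast (blocks_ne_nil hm I))
    simp only [List.sum_append, List.sum_cons, List.sum_nil, add_zero, I.blocks_sum] at this
    omega
  have h3 : J.blocks.head (blocks_ne_nil hn J) + (J.blocks.tail.take j').sum
      = (J.blocks.take (j' + 1)).sum := by
    conv_rhs => rw [← List.cons_head_tail (l := J.blocks) (blocks_ne_nil hn J)]
    rw [List.take_succ_cons, List.sum_cons]
  omega

lemma concat_part_left (I : Composition m) (J : Composition n) {k : ℕ}
    (h1 : 1 ≤ k) (h2 : k ≤ I.length) :
    part (concatComp I J) k = part I k := by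
  unfold part
  rw [concat_blocks, List.getD_append]
  rw [Composition.length] at h2
  omega

lemma concat_part_right (I : Composition m) (J : Composition n) {j : ℕ} (h1 : 1 ≤ j) :
    part (concatComp I J) (I.length + j) = part J j := by
  unfold part
  rw [concat_blocks, List.getD_append_right _ _ _ _ (by rw [Composition.length]; omega)]
  congr 1
  rw [Composition.length]
  omega

lemma concat_part_last (hn : 0 < n) (P : Composition m) (Q : Composition n) :
    part (concatComp P Q) ((concatComp P Q).length) = part Q Q.length := by
  rw [concat_length]
  exact concat_part_right P Q (length_pos hn Q)

end NSym
namespace NSym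
open Finset

variable {m n : ℕ}

lemma desSet_concat (hm : 0 < m) (hn : 0 < n) (I : Composition m) (J : Composition n) :
    desSet (concatComp I J) = desSet I ∪ {m} ∪ (desSet J).image (m + ·) := by
  have hI := length_pos hm I
  have hJ := length_pos hn J
  ext x
  simp only [Finset.mem_union, Finset.mem_image, Finset.mem_singleton, mem_desSet, concat_length]
  constructor
  · rintro ⟨k, h1, h2, hsum⟩
    rcases lt_trichotomy k I.length with h | h | h
    · left; left
      exact ⟨k, h1, by omega, by rw [← concat_take_sum_left I J (by omega)]; exact hsum⟩
    · left; right
      subst h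
      rw [concat_take_sum_left I J le_rfl, List.take_of_length_le (by rw [Composition.length]),
        I.blocks_sum] at hsum
      omega
    · right
      refine ⟨(J.blocks.take (k - I.length)).sum, ⟨k - I.length, by omega, by omega, rfl⟩, ?_⟩
      rw [← concat_take_sum_right I J (k - I.length), show I.length + (k - I.length) = k by omega]
      exact hsum
  · rintro ((⟨k, h1, h2, hsum⟩ | rfl) | ⟨y, ⟨k, h1, h2, hsum⟩, rfl⟩)
    · exact ⟨k, h1, by omega, by rw [concat_take_sum_left I J (by omega)]; exact hsum⟩
    · refine ⟨I.length, by omega, by omega, ?_⟩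
      rw [concat_take_sum_left I J le_rfl, List.take_of_length_le (by rw [Composition.length]),
        I.blocks_sum]
    · refine ⟨I.length + k, by omega, by omega, ?_⟩
      rw [concat_take_sum_right I J k, hsum]

lemma desSet_near (hm : 0 < m) (hn : 0 < n) (I : Composition m) (J : Composition n) :
    desSet (nearConcat hm hn I J) = desSet I ∪ (desSet J).image (m + ·) := by
  have hI := length_pos hm I
  have hJ := length_pos hn J
  ext x
  simp only [Finset.mem_union, Finset.mem_image, mem_desSet, near_length]
  constructor
  · rintro ⟨k, h1, h2, hsum⟩
    rcases le_or_gt k (I.length - 1) with h | h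
    · left
      exact ⟨k, h1, by omega, by rw [← near_take_sum_left hm hn I J h]; exact hsum⟩
    · right
      refine ⟨(J.blocks.take (k - (I.length - 1))).sum,
        ⟨k - (I.length - 1), by omega, by omega, rfl⟩, ?_⟩
      rw [← near_take_sum_right hm hn I J (j := k - (I.length - 1)) (by omega),
        show I.length - 1 + (k - (I.length - 1)) = k by omega]
      exact hsum
  · rintro (⟨k, h1, h2, hsum⟩ | ⟨y, ⟨k, h1, h2, hsum⟩, rfl⟩)
    · exact ⟨k, h1, by omega, by rw [near_take_sum_left hm hn I J (by omega)]; exact hsum⟩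
    · refine ⟨I.length - 1 + k, by omega, by omega, ?_⟩
      rw [near_take_sum_right hm hn I J h1, hsum]

lemma m_not_mem_desSet_near (hm : 0 < m) (hn : 0 < n) (I : Composition m) (J : Composition n) :
    m ∉ desSet (nearConcat hm hn I J) := by
  rw [desSet_near]
  simp only [Finset.mem_union, Finset.mem_image, not_or]
  constructor
  · intro h
    exact absurd (desSet_pos h).2 (by omega)
  · rintro ⟨y, hy, hxy⟩
    have := (desSet_pos hy).1
    omega

lemma m_mem_desSet_concat (hm : 0 < m) (hn : 0 < n) (P : Composition m) (Q : Composition n) :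
    m ∈ desSet (concatComp P Q) := by
  rw [desSet_concat hm hn]
  simp

end NSym
namespace NSym
open Finset

variable {m n : ℕ}

lemma AAcomp_concat (hm : 0 < m) (hn : 0 < n) (I P : Composition m) (J Q : Composition n) :
    AAcomp (concatComp I J) (concatComp P Q) =
      AAcomp I P ∪ (AAcomp J Q).image (P.length + ·) := by
  have hP := length_pos hm P
  have hQ := length_pos hn Q
  ext k
  simp only [AAcomp, desSet_concat hm hn I J, Finset.mem_filter, Finset.mem_Icc,
    Finset.mem_union, Finset.mem_image, Finset.mem_singleton, concat_length]
  constructor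
  · rintro ⟨⟨hk1, hk2⟩, hnd⟩
    rcases lt_trichotomy k P.length with h | h | h
    · left
      have hs : ((concatComp P Q).blocks.take k).sum = (P.blocks.take k).sum :=
        concat_take_sum_left P Q (by omega)
      refine ⟨⟨hk1, by omega⟩, fun hc => hnd ?_⟩
      rw [hs]
      exact Or.inl (Or.inl hc)
    · exfalso
      subst h
      apply hnd
      rw [concat_take_sum_left P Q le_rfl, List.take_of_length_le (by rw [Composition.length]),
        P.blocks_sum]
      exact Or.inl (Or.inr rfl)
    · right
      refine ⟨k - P.length, ⟨⟨by omega, by omega⟩, fun hc => hnd ?_⟩, by omega⟩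
      rw [show k = P.length + (k - P.length) by omega, concat_take_sum_right]
      exact Or.inr ⟨_, hc, rfl⟩
  · rintro (⟨⟨h1, h2⟩, hnd⟩ | ⟨j, ⟨⟨h1, h2⟩, hnd⟩, rfl⟩)
    · refine ⟨⟨h1, by omega⟩, ?_⟩
      rw [concat_take_sum_left P Q (by omega)]
      have hlt := take_sum_lt P (show k < P.length by omega)
      rintro ((hc | hc) | ⟨y, hy, hxy⟩)
      · exact hnd hc
      · omega
      · have := (desSet_pos hy).1
        omega
    · refine ⟨⟨by omega, by omega⟩, ?_⟩
      rw [concat_take_sum_right P Q j]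
      have hpos := take_sum_pos Q h1 (by omega)
      rintro ((hc | hc) | ⟨y, hy, hxy⟩)
      · have := (desSet_pos hc).2
        omega
      · omega
      · have : y = (Q.blocks.take j).sum := by omega
        subst this
        exact hnd hy

lemma AAcomp_near (hm : 0 < m) (hn : 0 < n) (I P : Composition m) (J Q : Composition n) :
    AAcomp (nearConcat hm hn I J) (concatComp P Q) =
      insert P.length (AAcomp I P ∪ (AAcomp J Q).image (P.length + ·)) := by
  have hP := length_pos hm P
  have hQ := length_pos hn Q
  ext k
  simp only [AAcomp, desSet_near hm hn I J, Finset.mem_filter, Finset.mem_Icc,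
    Finset.mem_union, Finset.mem_image, Finset.mem_insert, concat_length]
  have hsm : ((concatComp P Q).blocks.take P.length).sum = m := by
    rw [concat_take_sum_left P Q le_rfl, List.take_of_length_le (by rw [Composition.length]),
      P.blocks_sum]
  constructor
  · rintro ⟨⟨hk1, hk2⟩, hnd⟩
    rcases lt_trichotomy k P.length with h | h | h
    · right; left
      have hs : ((concatComp P Q).blocks.take k).sum = (P.blocks.take k).sum :=
        concat_take_sum_left P Q (by omega)
      refine ⟨⟨hk1, by omega⟩, fun hc => hnd ?_⟩
      rw [hs]
      exact Or.inl hc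
    · exact Or.inl h
    · right; right
      refine ⟨k - P.length, ⟨⟨by omega, by omega⟩, fun hc => hnd ?_⟩, by omega⟩
      rw [show k = P.length + (k - P.length) by omega, concat_take_sum_right]
      exact Or.inr ⟨_, hc, rfl⟩
  · rintro (rfl | ⟨⟨h1, h2⟩, hnd⟩ | ⟨j, ⟨⟨h1, h2⟩, hnd⟩, rfl⟩)
    · refine ⟨⟨by omega, by omega⟩, ?_⟩
      rw [hsm]
      rintro (hc | ⟨y, hy, hxy⟩)
      · have := (desSet_pos hc).2
        omega
      · have := (desSet_pos hy).1
        omega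
    · refine ⟨⟨h1, by omega⟩, ?_⟩
      rw [concat_take_sum_left P Q (by omega)]
      have hlt := take_sum_lt P (show k < P.length by omega)
      rintro (hc | ⟨y, hy, hxy⟩)
      · exact hnd hc
      · have := (desSet_pos hy).1
        omega
    · refine ⟨⟨by omega, by omega⟩, ?_⟩
      rw [concat_take_sum_right P Q j]
      have hpos := take_sum_pos Q h1 (by omega)
      rintro (hc | ⟨y, hy, hxy⟩)
      · have := (desSet_pos hc).2
        omega
      · have : y = (Q.blocks.take j).sum := by omega
        subst this
        exact hnd hy

lemma AAcomp_near_eq_of_not_mem (hm : 0 < m) (hn : 0 < n) (I : Composition m)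
    (J : Composition n) {M : Composition (m + n)} (hM : m ∉ desSet M) :
    AAcomp (nearConcat hm hn I J) M = AAcomp (concatComp I J) M := by
  unfold AAcomp
  apply Finset.filter_congr
  intro k hk
  simp only [Finset.mem_Icc] at hk
  have hne : (M.blocks.take k).sum ≠ m := fun h => hM (mem_desSet.mpr ⟨k, hk.1, hk.2, h⟩)
  rw [desSet_concat hm hn I J, desSet_near hm hn I J]
  simp only [Finset.mem_union, Finset.mem_singleton, eq_iff_iff]
  constructor
  · intro h hc
    rcases hc with (hc | hc) | hc
    · exact h (Or.inl hc)
    · exact hne hc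
    · exact h (Or.inr hc)
  · intro h hc
    rcases hc with hc | hc
    · exact h (Or.inl (Or.inl hc))
    · exact h (Or.inr hc)

end NSym
namespace NSym
open Finset

variable {m n : ℕ}

lemma SJ_append {R : Type*} [CommRing R] (l1 l2 : List ℕ) :
    SJ R (l1 ++ l2) = SJ R l1 * SJ R l2 := by
  simp [SJ, List.map_append, List.prod_append]

noncomputable def cc {R : Type*} [CommRing R] (t : ℕ → R) {N : ℕ} (X M : Composition N) : R :=
  (-1) ^ X.length * (-1) ^ M.length * (1 - t (part M M.length)) * ∏ k ∈ AAcomp X M, t (part M k)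

lemma Rr_eq {R : Type*} [CommRing R] (t : ℕ → R) {N : ℕ} (X : Composition N) :
    Rr t X = ∑ M : Composition N, cc t X M • SJ R M.blocks := rfl

lemma cc_concat {R : Type*} [CommRing R] (t : ℕ → R) (hm : 0 < m) (hn : 0 < n)
    (I P : Composition m) (J Q : Composition n) :
    cc t I P * cc t J Q =
      cc t (nearConcat hm hn I J) (concatComp P Q) + cc t (concatComp I J) (concatComp P Q) := by
  have hP := length_pos hm P
  have hQ := length_pos hn Q
  have hI := length_pos hm I
  obtain ⟨b, hb⟩ : ∃ b, I.length = b + 1 := ⟨I.length - 1, by omega⟩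
  unfold cc
  rw [AAcomp_concat hm hn, AAcomp_near hm hn]
  have hdisj : Disjoint (AAcomp I P) ((AAcomp J Q).image (P.length + ·)) := by
    rw [Finset.disjoint_left]
    intro a ha hb2
    simp only [AAcomp, Finset.mem_filter, Finset.mem_Icc, Finset.mem_image] at ha hb2
    obtain ⟨j, hj, rfl⟩ := hb2
    have := ha.1.2
    have := hj.1.1
    omega
  have hinj : ∀ x ∈ AAcomp J Q, ∀ y ∈ AAcomp J Q, P.length + x = P.length + y → x = y :=
    fun x _ y _ h => by omega
  have hnotmem : P.length ∉ AAcomp I P ∪ (AAcomp J Q).image (P.length + ·) := by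
    simp only [Finset.mem_union, AAcomp, Finset.mem_filter, Finset.mem_Icc, Finset.mem_image,
      not_or]
    constructor
    · rintro ⟨⟨_, h⟩, _⟩
      omega
    · rintro ⟨j, ⟨⟨hj, _⟩, _⟩, heq⟩
      omega
  rw [Finset.prod_insert hnotmem, Finset.prod_union hdisj, Finset.prod_image hinj]
  have e1 : ∏ k ∈ AAcomp I P, t (part (concatComp P Q) k) = ∏ k ∈ AAcomp I P, t (part P k) := by
    apply Finset.prod_congr rfl
    intro k hk
    simp only [AAcomp, Finset.mem_filter, Finset.mem_Icc] at hk
    rw [concat_part_left P Q hk.1.1 (by omega)]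
  have e2 : ∏ j ∈ AAcomp J Q, t (part (concatComp P Q) (P.length + j)) =
      ∏ j ∈ AAcomp J Q, t (part Q j) := by
    apply Finset.prod_congr rfl
    intro j hj
    simp only [AAcomp, Finset.mem_filter, Finset.mem_Icc] at hj
    rw [concat_part_right P Q hj.1.1]
  rw [e1, e2, concat_part_last hn P Q, concat_part_left P Q (by omega) le_rfl,
    concat_length I J, concat_length P Q, near_length, hb]
  have hl : b + 1 + J.length - 1 = b + J.length := by omega
  rw [hl]
  simp only [pow_add, pow_succ, pow_one]
  ring

lemma cc_cancel {R : Type*} [CommRing R] (t : ℕ → R) (hm : 0 < m) (hn : 0 < n)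
    (I : Composition m) (J : Composition n) {M : Composition (m + n)} (hM : m ∉ desSet M) :
    cc t (nearConcat hm hn I J) M + cc t (concatComp I J) M = 0 := by
  have hI := length_pos hm I
  obtain ⟨b, hb⟩ : ∃ b, I.length = b + 1 := ⟨I.length - 1, by omega⟩
  unfold cc
  rw [AAcomp_near_eq_of_not_mem hm hn I J hM, near_length, concat_length, hb]
  have hl : b + 1 + J.length - 1 = b + J.length := by omega
  rw [hl]
  simp only [pow_add, pow_succ, pow_one]
  ring

end NSym
namespace NSym
open Finset

variable {m n : ℕ}

lemma concat_inj {P P' : Composition m} {Q Q' : Composition n}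
    (h : concatComp P Q = concatComp P' Q') : P = P' ∧ Q = Q' := by
  have hb : P.blocks ++ Q.blocks = P'.blocks ++ Q'.blocks := by
    have := congrArg Composition.blocks h
    rwa [concat_blocks, concat_blocks] at this
  obtain ⟨h1, h2⟩ := append_cancel_of_sum_eq (fun x hx => P.blocks_pos hx)
    (fun x hx => P'.blocks_pos hx) hb (by rw [P.blocks_sum, P'.blocks_sum])
  exact ⟨Composition.ext h1, Composition.ext h2⟩

lemma exists_split {M : Composition (m + n)} (hM : m ∈ desSet M) :
    ∃ (P : Composition m) (Q : Composition n), concatComp P Q = M := by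
  obtain ⟨k, h1, h2, hsum⟩ := mem_desSet.mp hM
  have hdrop : (M.blocks.drop k).sum = n := by
    have : (M.blocks.take k).sum + (M.blocks.drop k).sum = m + n := by
      rw [← List.sum_append, List.take_append_drop, M.blocks_sum]
    omega
  refine ⟨⟨M.blocks.take k, fun hx => M.blocks_pos (List.take_subset _ _ hx), hsum⟩,
    ⟨M.blocks.drop k, fun hx => M.blocks_pos (List.drop_subset _ _ hx), hdrop⟩, ?_⟩
  apply Composition.ext
  rw [concat_blocks]
  exact List.take_append_drop k M.blocks

lemma near_inj (hm : 0 < m) (hn : 0 < n) {P P' : Composition m} {Q Q' : Composition n}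
    (h : nearConcat hm hn P Q = nearConcat hm hn P' Q') : P = P' ∧ Q = Q' := by
  have hb := congrArg Composition.blocks h
  rw [near_blocks, near_blocks] at hb
  have hsumP : P.blocks.dropLast.sum + P.blocks.getLast (blocks_ne_nil hm P) = m := by
    have := congrArg List.sum (P.blocks.dropLast_append_getLast (blocks_ne_nil hm P))
    simp only [List.sum_append, List.sum_cons, List.sum_nil, add_zero, P.blocks_sum] at this
    omega
  have hsumP' : P'.blocks.dropLast.sum + P'.blocks.getLast (blocks_ne_nil hm P') = m := by
    have := congrArg List.sum (P'.blocks.dropLast_append_getLast (blocks_ne_nil hm P'))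
    simp only [List.sum_append, List.sum_cons, List.sum_nil, add_zero, P'.blocks_sum] at this
    omega
  have hgP : 0 < P.blocks.getLast (blocks_ne_nil hm P) :=
    P.blocks_pos (List.getLast_mem _)
  have hgP' : 0 < P'.blocks.getLast (blocks_ne_nil hm P') :=
    P'.blocks_pos (List.getLast_mem _)
  have hhQ : 0 < Q.blocks.head (blocks_ne_nil hn Q) :=
    Q.blocks_pos (List.head_mem _)
  have hhQ' : 0 < Q'.blocks.head (blocks_ne_nil hn Q') :=
    Q'.blocks_pos (List.head_mem _)
  obtain ⟨e1, e2, e3⟩ := straddle_unique (m := m) hb (by omega) (by omega) (by omega) (by omega)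
  have hse := congrArg List.sum e1
  have hg : P.blocks.getLast (blocks_ne_nil hm P) = P'.blocks.getLast (blocks_ne_nil hm P') := by
    omega
  constructor
  · apply Composition.ext
    rw [← P.blocks.dropLast_append_getLast (blocks_ne_nil hm P),
      ← P'.blocks.dropLast_append_getLast (blocks_ne_nil hm P'), e1, hg]
  · apply Composition.ext
    rw [← List.cons_head_tail (l := Q.blocks) (blocks_ne_nil hn Q),
      ← List.cons_head_tail (l := Q'.blocks) (blocks_ne_nil hn Q'), e3]
    congr 1
    omega

lemma exists_near_split (hm : 0 < m) (hn : 0 < n) {M : Composition (m + n)}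
    (hM : m ∉ desSet M) :
    ∃ (P : Composition m) (Q : Composition n), nearConcat hm hn P Q = M := by
  have hnm : ∀ k, (M.blocks.take k).sum ≠ m := by
    intro k h
    rcases Nat.lt_or_ge k 1 with hk | hk
    · interval_cases k
      simp at h
      omega
    · rcases Nat.lt_or_ge k M.length with hk2 | hk2
      · exact hM (mem_desSet.mpr ⟨k, hk, by omega, h⟩)
      · rw [List.take_of_length_le (by rw [Composition.length] at hk2; omega), M.blocks_sum] at h
        omega
  obtain ⟨l1, x, l2, hsplit, hlt, hgt⟩ := straddle M.blocks m (fun _ hx => M.blocks_pos hx)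
    (by rw [M.blocks_sum]; omega) hnm
  have hl1pos : ∀ y ∈ l1, 0 < y := fun y hy =>
    M.blocks_pos (by rw [hsplit]; exact List.mem_append_left _ hy)
  have hl2pos : ∀ y ∈ l2, 0 < y := fun y hy =>
    M.blocks_pos (by rw [hsplit]; exact List.mem_append_right _ (List.mem_cons_of_mem _ hy))
  have hsums : l1.sum + x + l2.sum = m + n := by
    have := congrArg List.sum hsplit
    simp [List.sum_append, M.blocks_sum] at this
    omega
  refine ⟨⟨l1 ++ [m - l1.sum], ?_, by simp [List.sum_append]; omega⟩,
    ⟨(l1.sum + x - m) :: l2, ?_, ?_⟩, ?_⟩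
  · intro y hy
    rcases List.mem_append.mp hy with hy | hy
    · exact hl1pos y hy
    · simp at hy
      omega
  · intro y hy
    rcases List.mem_cons.mp hy with hy | hy
    · omega
    · exact hl2pos y hy
  · simp [List.sum_cons]
    omega
  · apply Composition.ext
    rw [near_blocks]
    simp only [List.dropLast_concat, List.head_cons, List.tail_cons, List.getLast_concat]
    rw [hsplit]
    congr 2
    omega

lemma desSet_subset_core (hm : 0 < m) (hn : 0 < n) {K I : Composition m} {L J : Composition n} :
    desSet K ∪ (desSet L).image (m + ·) ⊆ desSet I ∪ {m} ∪ (desSet J).image (m + ·) ↔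
      desSet K ⊆ desSet I ∧ desSet L ⊆ desSet J := by
  constructor
  · intro h
    constructor
    · intro x hx
      have hb := desSet_pos hx
      have := h (Finset.mem_union_left _ hx)
      simp only [Finset.mem_union, Finset.mem_singleton, Finset.mem_image] at this
      rcases this with (hc | hc) | ⟨y, hy, hxy⟩
      · exact hc
      · omega
      · have := (desSet_pos hy).1
        omega
    · intro y hy
      have hb := desSet_pos hy
      have := h (Finset.mem_union_right _ (Finset.mem_image_of_mem _ hy))
      simp only [Finset.mem_union, Finset.mem_singleton, Finset.mem_image] at this
      rcases this with (hc | hc) | ⟨y', hy', hxy⟩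
      · have := (desSet_pos hc).2
        omega
      · omega
      · have : y' = y := by omega
        subst this
        exact hy'
  · rintro ⟨h1, h2⟩
    apply Finset.union_subset
    · exact fun x hx => Finset.mem_union_left _ (Finset.mem_union_left _ (h1 hx))
    · intro x hx
      simp only [Finset.mem_image] at hx
      obtain ⟨y, hy, rfl⟩ := hx
      exact Finset.mem_union_right _ (Finset.mem_image_of_mem _ (h2 hy))

lemma subset_transfer_concat (hm : 0 < m) (hn : 0 < n) {K I : Composition m}
    {L J : Composition n} :
    desSet (concatComp K L) ⊆ desSet (concatComp I J) ↔
      desSet K ⊆ desSet I ∧ desSet L ⊆ desSet J := by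
  rw [desSet_concat hm hn, desSet_concat hm hn, ← desSet_subset_core hm hn (K := K) (L := L) (I := I) (J := J)]
  constructor
  · intro h
    intro x hx
    apply h
    simp only [Finset.mem_union] at hx ⊢
    tauto
  · intro h
    intro x hx
    simp only [Finset.mem_union, Finset.mem_singleton] at hx
    rcases hx with (hc | hc) | hc
    · exact h (by simp only [Finset.mem_union]; tauto)
    · simp [hc]
    · exact h (by simp only [Finset.mem_union]; tauto)

lemma subset_transfer_near (hm : 0 < m) (hn : 0 < n) {K I : Composition m}
    {L J : Composition n} :
    desSet (nearConcat hm hn K L) ⊆ desSet (concatComp I J) ↔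
      desSet K ⊆ desSet I ∧ desSet L ⊆ desSet J := by
  rw [desSet_near hm hn, desSet_concat hm hn]
  exact desSet_subset_core hm hn

end NSym
namespace NSym
open Finset

variable {m n : ℕ}

lemma Rr_mul {R : Type*} [CommRing R] (t : ℕ → R) (hm : 0 < m) (hn : 0 < n)
    (I : Composition m) (J : Composition n) :
    Rr t I * Rr t J = Rr t (nearConcat hm hn I J) + Rr t (concatComp I J) := by
  rw [Rr_eq (R := R) t I, Rr_eq (R := R) t J, Rr_eq (R := R) t (nearConcat hm hn I J),
    Rr_eq (R := R) t (concatComp I J)]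
  rw [Finset.sum_mul_sum, ← Finset.sum_add_distrib]
  have key : ∀ M : Composition (m + n),
      cc t (nearConcat hm hn I J) M • SJ R M.blocks + cc t (concatComp I J) M • SJ R M.blocks =
        (cc t (nearConcat hm hn I J) M + cc t (concatComp I J) M) • SJ R M.blocks :=
    fun M => (add_smul _ _ _).symm
  simp_rw [key]
  have lhs : ∀ (P : Composition m) (Q : Composition n),
      (cc t I P • SJ R P.blocks) * (cc t J Q • SJ R Q.blocks) =
        (cc t I P * cc t J Q) • SJ R (concatComp P Q).blocks := by
    intro P Q
    rw [smul_mul_smul_comm, concat_blocks, SJ_append]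
  simp_rw [lhs]
  rw [← Finset.sum_product']
  rw [← Finset.sum_filter_add_sum_filter_not Finset.univ
    (fun M : Composition (m + n) => m ∈ desSet M)]
  have h0 : ∑ M ∈ Finset.univ.filter (fun M : Composition (m + n) => ¬ m ∈ desSet M),
      (cc t (nearConcat hm hn I J) M + cc t (concatComp I J) M) • SJ R M.blocks = 0 := by
    apply Finset.sum_eq_zero
    intro M hMf
    rw [Finset.mem_filter] at hMf
    rw [cc_cancel t hm hn I J hMf.2, zero_smul]
  rw [h0, add_zero]
  apply Finset.sum_bij (i := fun (pq : Composition m × Composition n) _ => concatComp pq.1 pq.2)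
  · intro pq _
    simp [m_mem_desSet_concat hm hn]
  · intro a _ b _ h
    obtain ⟨h1, h2⟩ := concat_inj h
    exact Prod.ext h1 h2
  · intro M hMf
    rw [Finset.mem_filter] at hMf
    obtain ⟨P, Q, hPQ⟩ := exists_split hMf.2
    exact ⟨(P, Q), Finset.mem_product.mpr ⟨Finset.mem_univ _, Finset.mem_univ _⟩, hPQ⟩
  · intro pq _
    rw [cc_concat t hm hn I pq.1 J pq.2]

lemma Ss_mul {R : Type*} [CommRing R] (t : ℕ → R) (hm : 0 < m) (hn : 0 < n)
    (I : Composition m) (J : Composition n) :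
    Ss t I * Ss t J = Ss t (concatComp I J) := by
  unfold Ss
  rw [Finset.sum_mul_sum]
  have hrw : ∀ (K : Composition m) (L : Composition n),
      Rr (R := R) t K * Rr t L = Rr t (nearConcat hm hn K L) + Rr t (concatComp K L) :=
    fun K L => Rr_mul t hm hn K L
  simp_rw [hrw, Finset.sum_add_distrib]
  rw [← Finset.sum_product', ← Finset.sum_product']
  rw [← Finset.sum_filter_add_sum_filter_not
    (Finset.univ.filter (fun M : Composition (m + n) => desSet M ⊆ desSet (concatComp I J)))
    (fun M => m ∈ desSet M)]
  have e1 : (∑ pq ∈ (Finset.univ.filter (fun K : Composition m => desSet K ⊆ desSet I)) ×ˢ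
      (Finset.univ.filter (fun L : Composition n => desSet L ⊆ desSet J)),
        Rr (R := R) t (nearConcat hm hn pq.1 pq.2)) =
      ∑ M ∈ (Finset.univ.filter
          (fun M : Composition (m + n) => desSet M ⊆ desSet (concatComp I J))).filter
        (fun M => ¬ m ∈ desSet M), Rr t M := by
    apply Finset.sum_bij (i := fun pq _ => nearConcat hm hn pq.1 pq.2)
    · rintro ⟨K, L⟩ hKL
      rw [Finset.mem_product, Finset.mem_filter, Finset.mem_filter] at hKL
      rw [Finset.mem_filter, Finset.mem_filter]
      exact ⟨⟨Finset.mem_univ _, (subset_transfer_near hm hn).mpr ⟨hKL.1.2, hKL.2.2⟩⟩,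
        m_not_mem_desSet_near hm hn _ _⟩
    · intro a _ b _ h
      obtain ⟨h1, h2⟩ := near_inj hm hn h
      exact Prod.ext h1 h2
    · intro M hMf
      rw [Finset.mem_filter, Finset.mem_filter] at hMf
      obtain ⟨P, Q, hPQ⟩ := exists_near_split hm hn hMf.2
      refine ⟨(P, Q), ?_, hPQ⟩
      rw [Finset.mem_product, Finset.mem_filter, Finset.mem_filter]
      have := (subset_transfer_near hm hn (K := P) (L := Q) (I := I) (J := J)).mp
        (by rw [hPQ]; exact hMf.1.2)
      exact ⟨⟨Finset.mem_univ _, this.1⟩, ⟨Finset.mem_univ _, this.2⟩⟩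
    · intro pq _
      rfl
  have e2 : (∑ pq ∈ (Finset.univ.filter (fun K : Composition m => desSet K ⊆ desSet I)) ×ˢ
      (Finset.univ.filter (fun L : Composition n => desSet L ⊆ desSet J)),
        Rr (R := R) t (concatComp pq.1 pq.2)) =
      ∑ M ∈ (Finset.univ.filter
          (fun M : Composition (m + n) => desSet M ⊆ desSet (concatComp I J))).filter
        (fun M => m ∈ desSet M), Rr t M := by
    apply Finset.sum_bij (i := fun pq _ => concatComp pq.1 pq.2)
    · rintro ⟨K, L⟩ hKL
      rw [Finset.mem_product, Finset.mem_filter, Finset.mem_filter] at hKL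
      rw [Finset.mem_filter, Finset.mem_filter]
      exact ⟨⟨Finset.mem_univ _, (subset_transfer_concat hm hn).mpr ⟨hKL.1.2, hKL.2.2⟩⟩,
        m_mem_desSet_concat hm hn _ _⟩
    · intro a _ b _ h
      obtain ⟨h1, h2⟩ := concat_inj h
      exact Prod.ext h1 h2
    · intro M hMf
      rw [Finset.mem_filter, Finset.mem_filter] at hMf
      obtain ⟨P, Q, hPQ⟩ := exists_split hMf.2
      refine ⟨(P, Q), ?_, hPQ⟩
      rw [Finset.mem_product, Finset.mem_filter, Finset.mem_filter]
      have := (subset_transfer_concat hm hn (K := P) (L := Q) (I := I) (J := J)).mp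
        (by rw [hPQ]; exact hMf.1.2)
      exact ⟨⟨Finset.mem_univ _, this.1⟩, ⟨Finset.mem_univ _, this.2⟩⟩
    · intro pq _
      rfl
  rw [e1, e2]
  exact add_comm _ _

end NSym
/-- the `𝒮`-basis is multiplicative, `𝒮^I(t)·𝒮^J(t) = 𝒮^{IJ}(t)`;
equivalently, the `ℛ`-basis satisfies the ribbon-like product rule
`ℛ_I ℛ_J = ℛ_{I▷J} + ℛ_{IJ}`. -/
theorem stmt_3 {R : Type*} [CommRing R] (t : ℕ → R) {m n : ℕ} (hm : 0 < m) (hn : 0 < n)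
    (I : Composition m) (J : Composition n) :
    Ss t I * Ss t J = Ss t (concatComp I J) ∧
    Rr t I * Rr t J = Rr t (nearConcat hm hn I J) + Rr t (concatComp I J) := by
  exact ⟨NSym.Ss_mul t hm hn I J, NSym.Rr_mul t hm hn I J⟩
end

section
/- Let P_I := K_n(1^{n-1}, Y_I) and Q_I := L_n(Y^I, 1^{n-1}) where the parameter sequences are built from the boolean encoding: for I with boolean descent word u = (u_1,...,u_{n-1}), Y_I = (y_{u_1}, y_{u_1u_2}, ..., y_{u_1...u_{n-1}}) and Y^I = (y_{w_1},...,y_{w_{1...n-1}}) with w_{1...k} = u_1...u_{k-1}(1-u_k). Then ⟨Q_I, P_J⟩ = ∏_{k=1}^{n-1} (y^k(I) - y_k(J)), which vanishes if and only if I ≠ J (assuming all parameters y_u at distinct boolean words with a common prefix differing in the last letter are distinct). -/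
/-- The Grassmann generator `η_i` in the exterior algebra on the free module
`Fin N → R`. -/
noncomputable def etaF (R : Type*) [CommRing R] {N : ℕ} (i : Fin N) :
    ExteriorAlgebra R (Fin N → R) :=
  ExteriorAlgebra.ι R (Pi.single i 1)

/-- `η_D = η_{d_1} ⋯ η_{d_k}` for `D = {d_1 < ⋯ < d_k}`. -/
noncomputable def etaDF (R : Type*) [CommRing R] {N : ℕ} (D : Finset (Fin N)) :
    ExteriorAlgebra R (Fin N → R) :=
  ((D.sort (· ≤ ·)).map (etaF R)).prod

/-- `K_n(U,V) = (u_1 + v_1 η_1) ⋯ (u_{n-1} + v_{n-1} η_{n-1})` (here `N = n-1`). -/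
noncomputable def Kn {R : Type*} [CommRing R] {N : ℕ} (u v : Fin N → R) :
    ExteriorAlgebra R (Fin N → R) :=
  ((List.finRange N).map
    (fun i => algebraMap R (ExteriorAlgebra R (Fin N → R)) (u i) + v i • etaF R i)).prod

/-- `L_n(X,Y) = (y_1 - x_1 ξ_1) ⋯ (y_{n-1} - x_{n-1} ξ_{n-1})` (here `N = n-1`,
in the exterior algebra on the dual generators `ξ_i`, modelled by the same kind
of exterior algebra). -/
noncomputable def Ln {R : Type*} [CommRing R] {N : ℕ} (x y : Fin N → R) :
    ExteriorAlgebra R (Fin N → R) :=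
  ((List.finRange N).map
    (fun i => algebraMap R (ExteriorAlgebra R (Fin N → R)) (y i) - x i • etaF R i)).prod

/-- The prefix `u_1 u_2 ⋯ u_k` (as a `List Bool`) of the boolean word
`u : Fin N → Bool` encoding a composition (`u i = true` iff `i+1` is a descent). -/
def wordPrefix {N : ℕ} (u : Fin N → Bool) (k : ℕ) : List Bool :=
  ((List.finRange N).map u).take k

/-- `P_I = K_n(1^{n-1}, Y_I)` with `Y_I = (y_{u_1}, y_{u_1u_2}, …, y_u)`. -/
noncomputable def Pel {R : Type*} [CommRing R] {N : ℕ} (y : List Bool → R)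
    (u : Fin N → Bool) : ExteriorAlgebra R (Fin N → R) :=
  Kn (fun _ => 1) (fun k => y (wordPrefix u ((k : ℕ) + 1)))

/-- `Q_I = (y_{w_1} - ξ_1) ⋯ (y_{w_{1…n-1}} - ξ_{n-1})` with
`w_{1…k} = u_1 ⋯ u_{k-1} (1 - u_k)`. -/
noncomputable def Qel {R : Type*} [CommRing R] {N : ℕ} (y : List Bool → R)
    (u : Fin N → Bool) : ExteriorAlgebra R (Fin N → R) :=
  Ln (fun _ => 1) (fun k => y (wordPrefix u (k : ℕ) ++ [! u k]))

section Aux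
variable {R : Type*} [CommRing R] {N : ℕ}

lemma etaDF_insert (i : Fin N) (D : Finset (Fin N)) (h : ∀ j ∈ D, i < j) :
    etaDF R (insert i D) = etaF R i * etaDF R D := by
  have hi : i ∉ D := fun hm => lt_irrefl i (h i hm)
  unfold etaDF
  rw [Finset.sort_insert _ (fun b hb => (h b hb).le) hi, List.map_cons, List.prod_cons]

lemma expand (L : List (Fin N)) (hL : L.Pairwise (· < ·)) (a b : Fin N → R) :
    (L.map (fun i => algebraMap R (ExteriorAlgebra R (Fin N → R)) (a i) + b i • etaF R i)).prod
    = ∑ D ∈ L.toFinset.powerset,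
        ((∏ i ∈ L.toFinset \ D, a i) * ∏ i ∈ D, b i) • etaDF R D := by
  induction L with
  | nil => simp [etaDF]
  | cons i L ih =>
    rw [List.pairwise_cons] at hL
    obtain ⟨hiL, hL⟩ := hL
    have hiF : i ∉ L.toFinset := fun hm => lt_irrefl i (hiL i (List.mem_toFinset.mp hm))
    rw [List.map_cons, List.prod_cons, ih hL, List.toFinset_cons,
      Finset.sum_powerset_insert hiF]
    rw [add_mul, Finset.mul_sum, Finset.mul_sum]
    congr 1
    · refine Finset.sum_congr rfl fun D hD => ?_
      rw [Finset.mem_powerset] at hD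
      have hiD : i ∉ D := fun hm => hiF (hD hm)
      have h1 : i ∉ L.toFinset \ D := fun hm => hiF (Finset.mem_sdiff.mp hm).1
      rw [Finset.insert_sdiff_of_notMem _ hiD, Finset.prod_insert h1,
        Algebra.smul_def, ← mul_assoc, ← map_mul, ← mul_assoc, ← Algebra.smul_def]
    · refine Finset.sum_congr rfl fun D hD => ?_
      rw [Finset.mem_powerset] at hD
      have hiD : i ∉ D := fun hm => hiF (hD hm)
      have hlt : ∀ j ∈ D, i < j := fun j hj => hiL j (List.mem_toFinset.mp (hD hj))
      have hsd : insert i L.toFinset \ insert i D = L.toFinset \ D := by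
        ext j
        simp only [Finset.mem_sdiff, Finset.mem_insert]
        constructor
        · rintro ⟨hj | hj, h2⟩
          · exact absurd (Or.inl hj) h2
          · exact ⟨hj, fun h => h2 (Or.inr h)⟩
        · rintro ⟨hj, h2⟩
          refine ⟨Or.inr hj, ?_⟩
          rintro (rfl | h)
          exacts [hiF hj, h2 h]
      rw [etaDF_insert i D hlt, Finset.prod_insert hiD, hsd,
        smul_mul_assoc, mul_smul_comm, smul_smul]
      congr 1
      ring
end Aux

section Aux2
variable {R : Type*} [CommRing R] {N : ℕ}

lemma Kn_expand (a b : Fin N → R) :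
    Kn a b = ∑ D : Finset (Fin N), ((∏ i ∈ Dᶜ, a i) * ∏ i ∈ D, b i) • etaDF R D := by
  have h := expand (List.finRange N) (List.pairwise_lt_finRange N) a b
  simpa [Kn, Finset.compl_eq_univ_sdiff] using h

lemma Ln_eq_Kn (x y : Fin N → R) : Ln x y = Kn y (fun i => - x i) := by
  unfold Ln Kn
  simp [sub_eq_add_neg]

lemma pairKn (B : ExteriorAlgebra R (Fin N → R) →ₗ[R] ExteriorAlgebra R (Fin N → R) →ₗ[R] R)
    (hB : ∀ D E : Finset (Fin N), B (etaDF R D) (etaDF R E) = if D = E then 1 else 0)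
    (a b c d : Fin N → R) :
    B (Kn a b) (Kn c d) = ∑ D : Finset (Fin N),
      ((∏ i ∈ Dᶜ, a i) * ∏ i ∈ D, b i) * ((∏ i ∈ Dᶜ, c i) * ∏ i ∈ D, d i) := by
  rw [Kn_expand a b, Kn_expand c d, map_sum]
  simp [hB, mul_ite, Finset.sum_ite_eq, LinearMap.sum_apply, mul_assoc]
  exact Finset.sum_congr rfl fun D _ => by ring

lemma wordPrefix_succ (u : Fin N → Bool) (k : Fin N) :
    wordPrefix u ((k : ℕ) + 1) = wordPrefix u (k : ℕ) ++ [u k] := by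
  unfold wordPrefix
  simp [List.take_succ, List.getElem?_map, List.getElem?_eq_getElem, k.isLt,
    List.getElem_finRange]

lemma wordPrefix_congr (u v : Fin N → Bool) (k : ℕ)
    (h : ∀ j : Fin N, (j : ℕ) < k → u j = v j) :
    wordPrefix u k = wordPrefix v k := by
  unfold wordPrefix
  apply List.ext_getElem (by simp)
  intro n h1 h2
  simp only [List.length_take, List.length_map, List.length_finRange, lt_min_iff] at h1
  simp only [List.getElem_take, List.getElem_map, List.getElem_finRange]
  exact h _ h1.1

end Aux2

/-- biorthogonality of the bases `(P_I)`, `(Q_I)`: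
`⟨Q_I, P_J⟩ = ∏_{k=1}^{n-1} (y^k(I) - y_k(J))`, which vanishes if and only if
`I ≠ J`, assuming the parameters at sibling boolean words (same prefix,
different last letter) are distinct. -/
theorem stmt_8 {R : Type*} [CommRing R] [IsDomain R] {N : ℕ}
    (B : ExteriorAlgebra R (Fin N → R) →ₗ[R] ExteriorAlgebra R (Fin N → R) →ₗ[R] R)
    (hB : ∀ D E : Finset (Fin N), B (etaDF R D) (etaDF R E) = if D = E then 1 else 0)
    (y : List Bool → R) (u v : Fin N → Bool) :
    B (Qel y u) (Pel y v) =
      ∏ k : Fin N, (y (wordPrefix u (k : ℕ) ++ [! u k]) - y (wordPrefix v ((k : ℕ) + 1)))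
    ∧ ((∀ l : List Bool, y (l ++ [true]) ≠ y (l ++ [false])) →
        (B (Qel y u) (Pel y v) = 0 ↔ u ≠ v)) := by
  have h1 : B (Qel y u) (Pel y v) =
      ∏ k : Fin N, (y (wordPrefix u (k : ℕ) ++ [! u k]) - y (wordPrefix v ((k : ℕ) + 1))) := by
    unfold Qel Pel
    rw [Ln_eq_Kn, pairKn B hB]
    have h3 : ∀ k ∈ (Finset.univ : Finset (Fin N)),
        y (wordPrefix u (k : ℕ) ++ [! u k]) - y (wordPrefix v ((k : ℕ) + 1))
          = -y (wordPrefix v ((k : ℕ) + 1)) + y (wordPrefix u (k : ℕ) ++ [! u k]) :=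
      fun k _ => by ring
    rw [Finset.prod_congr rfl h3,
      Finset.prod_add (fun k : Fin N => -y (wordPrefix v ((k : ℕ) + 1)))
        (fun k : Fin N => y (wordPrefix u (k : ℕ) ++ [! u k])) Finset.univ,
      Finset.powerset_univ]
    refine Finset.sum_congr rfl fun D _ => ?_
    have h4 : ∏ k ∈ D, (-y (wordPrefix v ((k : ℕ) + 1)))
        = (∏ k ∈ D, (-1 : R)) * ∏ k ∈ D, y (wordPrefix v ((k : ℕ) + 1)) := by
      rw [← Finset.prod_mul_distrib]
      simp
    rw [← Finset.compl_eq_univ_sdiff, h4, Finset.prod_const_one]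
    ring
  refine ⟨h1, fun hy => ?_⟩
  constructor
  · intro h0 huv
    subst huv
    rw [h1] at h0
    rcases Finset.prod_eq_zero_iff.mp h0 with ⟨k, -, hk⟩
    simp only [wordPrefix_succ u k] at hk
    have hk' := sub_eq_zero.mp hk
    cases hu : u k with
    | false => rw [hu] at hk'; exact hy _ (by simpa using hk')
    | true => rw [hu] at hk'; exact hy _ (by simpa using hk'.symm)
  · intro hne
    obtain ⟨k, hk⟩ := Function.ne_iff.mp hne
    have hs : (Finset.univ.filter (fun k => u k ≠ v k)).Nonempty :=
      ⟨k, by simp [hk]⟩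
    set k0 := (Finset.univ.filter (fun k => u k ≠ v k)).min' hs with hk0def
    have hk0 : u k0 ≠ v k0 := by
      have := Finset.min'_mem _ hs
      simpa using (Finset.mem_filter.mp this).2
    have hmin : ∀ j : Fin N, (j : ℕ) < (k0 : ℕ) → u j = v j := by
      intro j hj
      by_contra hj'
      have hle : k0 ≤ j := Finset.min'_le _ j (by simp [hj'])
      exact absurd hj (not_lt.mpr (Fin.le_def.mp hle))
    rw [h1]
    apply Finset.prod_eq_zero (Finset.mem_univ k0)
    have hv0 : v k0 = ! u k0 := by
      cases hu : u k0 <;> cases hv : v k0 <;> simp_all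
    simp only [wordPrefix_succ v k0, wordPrefix_congr u v (k0 : ℕ) hmin, hv0, sub_self]
end

section
/- In the exterior algebra on η_1,...,η_{n-1}, the elements 𝒬'_I = K_n(U_I, 0^{n-1}) (products ∏_{j∈Des(I)}(t_{c(j)} + η_j) with c(j) = ℓ(I)+1-r(j)) satisfy: for a one-part element 𝒬'_i and arbitrary 𝒬'_J, 𝒬'_i · 𝒬'_J-shifted = (1 - t_{ℓ(J)}) 𝒬'_{i▷J} + 𝒬'_{i·J}, where the shift replaces each η_k in 𝒬'_J by η_{k+i}. -/
/-- The Grassmann generator `η_j` (`j ≥ 1` a cell position), in the exterior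
algebra on the free module `ℕ → R`. -/
noncomputable def etaN (R : Type*) [CommRing R] (j : ℕ) : ExteriorAlgebra R (ℕ → R) :=
  ExteriorAlgebra.ι R (Pi.single j 1)

/-- `η_D = η_{d_1} ⋯ η_{d_k}` for `D = {d_1 < ⋯ < d_k}`. -/
noncomputable def etaDN (R : Type*) [CommRing R] (D : Finset ℕ) :
    ExteriorAlgebra R (ℕ → R) :=
  ((D.sort (· ≤ ·)).map (etaN R)).prod

/-- `r(j)`: the row index of the cell `j` in the ribbon diagram of the
composition with descent set `D` (rows counted from the top; the descent cell
is counted with the row it turns into). -/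
def rowIdx (D : Finset ℕ) (j : ℕ) : ℕ := 1 + (D.filter (· ≤ j)).card

/-- `c(j) = ℓ(I) + 1 - r(j)`, for `I` the composition with descent set `D`
(so `ℓ(I) = D.card + 1`). -/
def cvalP (D : Finset ℕ) (j : ℕ) : ℕ := (D.card + 1) + 1 - rowIdx D j

/-- `𝒬'_I = ∏_{j ∈ Des(I)} (t_{c(j)} + η_j)` (ordered product, increasing `j`),
for `I` the composition with descent set `D`. -/
noncomputable def Qp (R : Type*) [CommRing R] (t : ℕ → R) (D : Finset ℕ) :
    ExteriorAlgebra R (ℕ → R) :=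
  ((D.sort (· ≤ ·)).map
    (fun j => algebraMap R (ExteriorAlgebra R (ℕ → R)) (t (cvalP D j)) + etaN R j)).prod

/-- the product of a one-part `𝒬'_i` (which is the empty product
`𝒬'_∅ = 1`) with the shift of `𝒬'_J` by `i` (replacing each `η_k` by
`η_{k+i}`, i.e. with descent set `E + i`), the product of `Sym_i × Sym_n → Sym_{i+n}`
being realized in the Grassmann model by `x·(1+η_i)·shift(y)`, splits as
`(1 - t_{ℓ(J)}) 𝒬'_{i▷J} + 𝒬'_{i·J}`; here `Des(i▷J) = E + i` and
`Des(i·J) = {i} ∪ (E + i)`, and `ℓ(J) = E.card + 1`. -/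
theorem stmt_10 {R : Type*} [CommRing R] (t : ℕ → R) (i n : ℕ) (hi : 0 < i) (hn : 0 < n)
    (E : Finset ℕ) (hE : E ⊆ Finset.Icc 1 (n-1)) :
    Qp R t (∅ : Finset ℕ) * ((1 + etaN R i) * Qp R t (E.image (· + i))) =
      (1 - t (E.card + 1)) • Qp R t (E.image (· + i))
        + Qp R t (insert i (E.image (· + i))) := by
  set D := E.image (· + i) with hD
  have hlt : ∀ d ∈ D, i < d := by
    intro d hd
    rcases Finset.mem_image.mp hd with ⟨e, he, rfl⟩
    have := (Finset.mem_Icc.mp (hE he)).1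
    omega
  have hni : i ∉ D := fun h => lt_irrefl i (hlt i h)
  have hcard : D.card = E.card :=
    Finset.card_image_of_injective _ (fun a b h => by omega)
  have hsort : (insert i D).sort (· ≤ ·) = i :: D.sort (· ≤ ·) :=
    Finset.sort_insert _ (fun b hb => (hlt b hb).le) hni
  have hcv_i : cvalP (insert i D) i = E.card + 1 := by
    have hfilt : (insert i D).filter (· ≤ i) = {i} := by
      ext x
      simp only [Finset.mem_filter, Finset.mem_insert, Finset.mem_singleton]
      constructor
      · rintro ⟨h1 | h1, h2⟩
        · exact h1
        · exact absurd h2 (not_le.mpr (hlt x h1))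
      · rintro rfl; exact ⟨Or.inl rfl, le_refl _⟩
    simp [cvalP, rowIdx, hfilt, Finset.card_insert_of_notMem hni, hcard]
  have hcv : ∀ j ∈ D.sort (· ≤ ·), cvalP (insert i D) j = cvalP D j := by
    intro j hj
    have hjD : j ∈ D := (Finset.mem_sort _).mp hj
    have hij : i ≤ j := (hlt j hjD).le
    have hfilt : (insert i D).filter (· ≤ j) = insert i (D.filter (· ≤ j)) := by
      rw [Finset.filter_insert, if_pos hij]
    have hni' : i ∉ D.filter (· ≤ j) := fun h => hni (Finset.mem_filter.mp h).1
    have hle : (D.filter (· ≤ j)).card ≤ D.card := Finset.card_filter_le _ _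
    simp only [cvalP, rowIdx, hfilt, Finset.card_insert_of_notMem hni,
      Finset.card_insert_of_notMem hni', hcard]
    omega
  have hQins : Qp R t (insert i D) =
      (algebraMap R (ExteriorAlgebra R (ℕ → R)) (t (E.card + 1)) + etaN R i) * Qp R t D := by
    rw [Qp, hsort, List.map_cons, List.prod_cons, hcv_i, Qp]
    congr 1
    exact congrArg List.prod (List.map_congr_left fun j hj => by rw [hcv j hj])
  have hQe : Qp R t (∅ : Finset ℕ) = 1 := by simp [Qp]
  rw [hQe, one_mul, hQins, add_mul, add_mul, one_mul, sub_smul, one_smul,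
    Algebra.smul_def]
  abel
end

section
/- The complete homogeneous symmetric polynomial of degree n evaluated at the geometric progression (1, q, q², ..., q^s) equals the Gaussian q-binomial coefficient: h_n(1, q, ..., q^s) = qbinom(s+n, n). -/
/-- The complete homogeneous symmetric polynomial of degree `n` in the `s+1`
(ordered) variables `x 0, x 1, ..., x s`. -/
def hpoly {R : Type*} [CommRing R] (x : ℕ → R) (s n : ℕ) : R :=
  ∑ f ∈ Finset.univ.filter (fun f : Fin n → Fin (s+1) => ∀ i j : Fin n, i ≤ j → f i ≤ f j),
    ∏ i, x ((f i : ℕ))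

/-- The Gaussian (q-)binomial coefficient `[m choose k]_q`, defined by the
q-Pascal recursion `[m+1,k+1]_q = [m,k]_q + q^(k+1) [m,k+1]_q`; as a polynomial in `q`
it equals `∏_{i=1}^{k} (1-q^{m-k+i})/(1-q^i)`. -/
def qbinom {R : Type*} [CommRing R] (q : R) : ℕ → ℕ → R
  | _, 0 => 1
  | 0, _+1 => 0
  | m+1, k+1 => qbinom q m k + q^(k+1) * qbinom q m (k+1)

lemma qbinom_zero_right {R : Type*} [CommRing R] (q : R) (m : ℕ) : qbinom q m 0 = 1 := by
  cases m <;> rfl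

lemma qbinom_eq_zero {R : Type*} [CommRing R] (q : R) : ∀ {m k : ℕ}, m < k → qbinom q m k = 0 := by
  intro m
  induction m with
  | zero => intro k h; cases k with
    | zero => omega
    | succ k => rfl
  | succ m ih =>
    intro k h
    cases k with
    | zero => omega
    | succ k =>
      show qbinom q m k + q^(k+1) * qbinom q m (k+1) = 0
      rw [ih (by omega), ih (by omega), mul_zero, add_zero]

lemma qbinom_self {R : Type*} [CommRing R] (q : R) (m : ℕ) : qbinom q m m = 1 := by
  induction m with
  | zero => rfl
  | succ m ih =>
    show qbinom q m m + q^(m+1) * qbinom q m (m+1) = 1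
    rw [ih, qbinom_eq_zero q (by omega), mul_zero, add_zero]

lemma hpoly_zero {R : Type*} [CommRing R] (x : ℕ → R) (s : ℕ) : hpoly x s 0 = 1 := by
  simp [hpoly]

lemma hpoly_rec {R : Type*} [CommRing R] (x : ℕ → R) (t n : ℕ) :
    hpoly x (t+1) (n+1) = x 0 * hpoly x (t+1) n + hpoly (fun k => x (k+1)) t (n+1) := by
  unfold hpoly
  rw [← Finset.sum_filter_add_sum_filter_not _ (fun f : Fin (n+1) → Fin (t+2) => f 0 = 0)]
  congr 1
  · rw [Finset.mul_sum]
    refine Finset.sum_bij' (fun f _ => f ∘ Fin.succ)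
      (fun g _ => Fin.cons (0 : Fin (t+2)) g) ?hi ?hj ?li ?ri ?h
    case hi =>
      intro f hf
      simp only [Finset.mem_filter, Finset.mem_univ, true_and] at hf ⊢
      intro i j hij
      exact hf.1 _ _ (by simpa using hij)
    case hj =>
      intro g hg
      simp only [Finset.mem_filter, Finset.mem_univ, true_and] at hg ⊢
      constructor
      · intro i j hij
        induction i using Fin.cases with
        | zero =>
          induction j using Fin.cases with
          | zero => exact le_refl _
          | succ j => exact Fin.zero_le _
        | succ i =>
          induction j using Fin.cases with
          | zero =>
            exfalso
            simp [Fin.le_def] at hij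
          | succ j => simpa using hg i j (by simpa using hij)
      · rfl
    case li =>
      intro f hf
      simp only [Finset.mem_filter, Finset.mem_univ, true_and] at hf
      funext i
      induction i using Fin.cases with
      | zero => simpa using hf.2.symm
      | succ i => simp
    case ri =>
      intro g hg
      funext i
      simp
    case h =>
      intro f hf
      simp only [Finset.mem_filter, Finset.mem_univ, true_and] at hf
      rw [Fin.prod_univ_succ, hf.2]
      simp
  · refine Finset.sum_bij' (fun (f : Fin (n+1) → Fin (t+2)) _ =>
        fun i : Fin (n+1) => (⟨(f i : ℕ) - 1, by omega⟩ : Fin (t+1)))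
      (fun (g : Fin (n+1) → Fin (t+1)) _ => fun i => (g i).succ) ?hi ?hj ?li ?ri ?h
    case hi =>
      intro f hf
      simp only [Finset.mem_filter, Finset.mem_univ, true_and] at hf ⊢
      intro i j hij
      have := hf.1 i j hij
      simp only [Fin.le_def] at this ⊢
      omega
    case hj =>
      intro g hg
      simp only [Finset.mem_filter, Finset.mem_univ, true_and] at hg ⊢
      constructor
      · intro i j hij
        have := hg i j hij
        simp only [Fin.le_def, Fin.val_succ] at this ⊢
        omega
      · exact Fin.succ_ne_zero _
    case li =>
      intro f hf
      simp only [Finset.mem_filter, Finset.mem_univ, true_and] at hf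
      funext i
      have h1 : (f 0 : ℕ) ≠ 0 := fun h => hf.2 (Fin.ext h)
      have h2 : (f 0 : ℕ) ≤ (f i : ℕ) := hf.1 0 i (Fin.zero_le _)
      simp only [Fin.ext_iff, Fin.val_succ]
      omega
    case ri =>
      intro g hg
      funext i
      simp [Fin.ext_iff]
    case h =>
      intro f hf
      simp only [Finset.mem_filter, Finset.mem_univ, true_and] at hf
      refine Finset.prod_congr rfl fun i _ => ?_
      have h1 : (f 0 : ℕ) ≠ 0 := fun h => hf.2 (Fin.ext h)
      have h2 : (f 0 : ℕ) ≤ (f i : ℕ) := hf.1 0 i (Fin.zero_le _)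
      show x _ = x _
      congr 1
      simp only
      omega

lemma hpoly_shift {R : Type*} [CommRing R] (q : R) (s m : ℕ) :
    hpoly (fun k => q ^ (k+1)) s m = q ^ m * hpoly (fun k => q ^ k) s m := by
  unfold hpoly
  rw [Finset.mul_sum]
  apply Finset.sum_congr rfl
  intro f _
  simp [pow_succ, Finset.prod_mul_distrib, mul_comm]


/-- `h_n(1, q, q^2, ..., q^s)` equals the Gaussian binomial
coefficient `[s+n choose n]_q`. -/
theorem stmt_12 {R : Type*} [CommRing R] (q : R) (s n : ℕ) :
    hpoly (fun k => q ^ k) s n = qbinom q (s + n) n := by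
  induction n generalizing s with
  | zero => rw [hpoly_zero, qbinom_zero_right]
  | succ n ih =>
    induction s with
    | zero =>
      have h1 : hpoly (fun k => q ^ k) 0 (n+1) = 1 := by
        unfold hpoly
        have : (Finset.univ.filter (fun f : Fin (n+1) → Fin 1 => ∀ i j : Fin (n+1), i ≤ j → f i ≤ f j)) = Finset.univ := by
          apply Finset.filter_true_of_mem
          intro f _ i j _
          exact le_of_eq (Subsingleton.elim _ _)
        rw [this]
        simp [Subsingleton.elim _ (fun _ : Fin (n+1) => (0 : Fin 1))]
      rw [h1, Nat.zero_add, qbinom_self]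
    | succ t iht =>
      rw [hpoly_rec, hpoly_shift, ih, iht]
      rw [show t + 1 + (n+1) = (t+n+1)+1 by omega]
      show _ = qbinom q (t+n+1) n + q^(n+1) * qbinom q (t+n+1) (n+1)
      rw [show t + 1 + n = t + n + 1 by omega, show t + (n+1) = t + n + 1 by omega]
      ring
end

section
/- For compositions I ⊨ m and J ⊨ n with I finer than J, the cardinality of the set E = [1, ℓ(J)-1] \ Des((I∧J)_J) computed from (I,J) equals the cardinality of E' = [1, ℓ(Ī~)-1] \ Des((Ī~ ∧ J̄~)_{Ī~}) computed from the conjugate-mirror pair; more generally, for any two compositions I, J of the same n, the sets E and E' defined as in Theorem 6.3 of the paper have equal cardinality. -/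
/-- The descent set of the refining composition `K_I` (for `K` coarser than
`I`): the image of `Des(K)` (here `C`) under `c ↦ #{d ∈ Des(I) : d ≤ c}`. -/
def refineDes (base C : Finset ℕ) : Finset ℕ :=
  C.image (fun c => (base.filter (· ≤ c)).card)

/-- The descent set of the conjugate mirror `Ī∼`: the complement of `Des(I)`
in `[1, n-1]`. -/
def complDes (n : ℕ) (D : Finset ℕ) : Finset ℕ := Finset.Icc 1 (n-1) \ D

lemma desSet_subset {n : ℕ} (I : Composition n) : desSet I ⊆ Finset.Icc 1 (n-1) := by
  intro x hx
  simp only [desSet, List.mem_toFinset, List.mem_map, List.mem_range] at hx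
  obtain ⟨k, hk, rfl⟩ := hx
  have hk' : k + 1 < I.blocks.length := by
    have := I.blocks_length; omega
  have hpos : ∀ x ∈ I.blocks, 0 < x := fun x hx => I.blocks_pos hx
  have hsum : I.blocks.sum = n := I.blocks_sum
  have hsplit : (I.blocks.take (k+1)).sum + (I.blocks.drop (k+1)).sum = n := by
    rw [← List.sum_append, List.take_append_drop, hsum]
  have ht : 0 < (I.blocks.take (k+1)).sum := by
    apply List.sum_pos
    · exact fun x hx => hpos x (List.mem_of_mem_take hx)
    · intro hnil
      have := congrArg List.length hnil
      rw [List.length_take, List.length_nil] at this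
      omega
  have hd : 0 < (I.blocks.drop (k+1)).sum := by
    apply List.sum_pos
    · exact fun x hx => hpos x (List.mem_of_mem_drop hx)
    · intro hnil
      have := congrArg List.length hnil
      rw [List.length_drop, List.length_nil] at this
      omega
  refine Finset.mem_Icc.2 ⟨ht, ?_⟩
  omega

lemma refineDes_subset (base C : Finset ℕ) (h : C ⊆ base) :
    refineDes base C ⊆ Finset.Icc 1 base.card := by
  intro x hx
  simp only [refineDes, Finset.mem_image] at hx
  obtain ⟨c, hc, rfl⟩ := hx
  refine Finset.mem_Icc.2 ⟨?_, Finset.card_filter_le _ _⟩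
  exact Finset.card_pos.2 ⟨c, Finset.mem_filter.2 ⟨h hc, le_refl c⟩⟩

lemma refineDes_card (base C : Finset ℕ) (h : C ⊆ base) :
    (refineDes base C).card = C.card := by
  apply Finset.card_image_of_injOn
  have mono : ∀ c1 c2 : ℕ, c2 ∈ C → c1 < c2 →
      (base.filter (· ≤ c1)).card < (base.filter (· ≤ c2)).card := by
    intro c1 c2 h2 hlt
    apply Finset.card_lt_card
    constructor
    · intro x hx
      simp only [Finset.mem_filter] at hx ⊢
      exact ⟨hx.1, by omega⟩
    · intro hsub
      have := hsub (Finset.mem_filter.2 ⟨h h2, le_refl c2⟩)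
      simp only [Finset.mem_filter] at this; omega
  intro c1 h1 c2 h2 heq
  rcases lt_trichotomy c1 c2 with hlt | he | hgt
  · exact absurd heq (Nat.ne_of_lt (mono c1 c2 h2 hlt))
  · exact he
  · exact absurd heq.symm (Nat.ne_of_lt (mono c2 c1 h1 hgt))

lemma key (base C : Finset ℕ) (h : C ⊆ base) :
    (Finset.Icc 1 base.card \ refineDes base C).card = base.card - C.card := by
  rw [Finset.card_sdiff_of_subset (refineDes_subset base C h), refineDes_card base C h,
    Nat.card_Icc]
  simp

/-- for any two compositions `I, J` of `n`, the sets
`E = [1, ℓ(J)-1] \ Des((I∧J)_J)` and `E' = [1, ℓ(Ī∼)-1] \ Des((Ī∼ ∧ J̄∼)_{Ī∼})`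
have equal cardinality.  Here `I∧J` is the composition with descent set
`Des(I) ∩ Des(J)`, and `Ī∼`, `J̄∼` (conjugates of mirrors) have the
complementary descent sets, so that
`Des((I∧J)_J) = refineDes (Des J) (Des I ∩ Des J)`, `ℓ(J) - 1 = |Des J|`, and
similarly on the complementary side. -/
theorem stmt_15 {n : ℕ} (hn : 0 < n) (I J : Composition n) :
    (Finset.Icc 1 (desSet J).card \
        refineDes (desSet J) (desSet I ∩ desSet J)).card =
      (Finset.Icc 1 (complDes n (desSet I)).card \
        refineDes (complDes n (desSet I))
          (complDes n (desSet I) ∩ complDes n (desSet J))).card := by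
  rw [key _ _ Finset.inter_subset_right, key _ _ Finset.inter_subset_left]
  set A := desSet I
  set B := desSet J
  set U := Finset.Icc 1 (n-1)
  have hA : A ⊆ U := desSet_subset I
  have hB : B ⊆ U := desSet_subset J
  have h1 : complDes n A ∩ complDes n B = U \ (A ∪ B) := by
    ext x
    simp only [complDes, Finset.mem_inter, Finset.mem_sdiff, Finset.mem_union]
    tauto
  have hcA : (complDes n A).card = U.card - A.card :=
    Finset.card_sdiff_of_subset hA
  have h2 : (U \ (A ∪ B)).card = U.card - (A ∪ B).card :=
    Finset.card_sdiff_of_subset (Finset.union_subset hA hB)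
  have h3 : (A ∪ B).card + (A ∩ B).card = A.card + B.card :=
    Finset.card_union_add_card_inter A B
  have h4 : A.card ≤ U.card := Finset.card_le_card hA
  have h5 : (A∪B).card ≤ U.card := Finset.card_le_card (Finset.union_subset hA hB)
  have h6 : (A ∩ B).card ≤ B.card := Finset.card_le_card Finset.inter_subset_right
  have h7 : A.card ≤ (A ∪ B).card := Finset.card_le_card Finset.subset_union_left
  rw [h1] at *
  omega
end

section
/- In the exterior algebra on η_1,...,η_{n-1}, for each K ≤ I (coarser), set S(I,K) = (d_p, d_{p-1}, ..., d_1) where {d_1 < ... < d_p} = Des((I_K)~). Then the product 𝒬'_I · (shift of 𝒬'_J by |I|) expands as ∑_{K≤I} [∏_{j=1}^{ℓ(I)-ℓ(K)}(t_{s_j} - t_{j+s_j+ℓ(J)+ℓ(K)-ℓ(I)})] 𝒬'_{K·J} + (1-t_{ℓ(J)}) [∏_{j=1}^{ℓ(I)-ℓ(K)}(t_{s_j} - t_{j+s_j+ℓ(J)+ℓ(K)-ℓ(I)-1})] 𝒬'_{K▷J}, with s_j = s^{I,K}_j the j-th entry of S(I,K), and with the convention that any term containing t_i with i ≤ 0 is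 zero. -/
/-- The descent set of the conjugate `M∼` of a composition `M` of `l`:
`Des(M∼) = [1, l-1] \ (l - Des(M))`. -/
def conjDes (l : ℕ) (Dm : Finset ℕ) : Finset ℕ :=
  Finset.Icc 1 (l-1) \ (Dm.image (fun d => l - d))

/-- The sequence `S(I,K) = (d_p, …, d_1)` where `{d_1 < ⋯ < d_p} = Des((I_K)∼)`,
for `I` with descent set `DI` and `K ≤ I` with descent set `C ⊆ DI`
(`I_K` is a composition of `ℓ(I) = DI.card + 1`). -/
def sListQ (DI C : Finset ℕ) : List ℕ :=
  ((conjDes (DI.card + 1) (refineDes DI C)).sort (· ≤ ·)).reverse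

/-- `∏_{j=1}^{ℓ(I)-ℓ(K)} (t_{s_j} - t_{j+s_j+ℓ(J)+ℓ(K)-ℓ(I)-off})`, with the
convention that any term containing a `t_i` with `i ≤ 0` is zero. -/
def prodTermQ {R : Type*} [CommRing R] (t : ℕ → R) (lI lK lJ : ℕ) (s : List ℕ)
    (off : ℕ) : R :=
  if ∀ j ∈ Finset.Icc 1 (lI - lK), lI + off < j + s.getD (j-1) 0 + lJ + lK then
    ∏ j ∈ Finset.Icc 1 (lI - lK),
      (t (s.getD (j-1) 0) - t (j + s.getD (j-1) 0 + lJ + lK - lI - off))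
  else 0

open Finset

section Aux
variable {R : Type*} [CommRing R]

/-- rank of `x` in `C`. -/
def rkF (C : Finset ℕ) (x : ℕ) : ℕ := (C.filter (· ≤ x)).card

lemma cvalP_eq (D : Finset ℕ) (x : ℕ) : cvalP D x = D.card + 1 - rkF D x := by
  simp only [cvalP, rowIdx, rkF]; omega

lemma etaDN_empty : etaDN R ∅ = 1 := by simp [etaDN]

lemma etaDN_singleton (a : ℕ) : etaDN R {a} = etaN R a := by simp [etaDN]

lemma sort_union {D₁ D₂ : Finset ℕ} (h : ∀ x ∈ D₁, ∀ y ∈ D₂, x < y) :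
    (D₁ ∪ D₂).sort (· ≤ ·) = D₁.sort (· ≤ ·) ++ D₂.sort (· ≤ ·) := by
  haveI : IsAntisymm ℕ (· ≤ ·) := ⟨fun _ _ h h' => le_antisymm h h'⟩
  refine (fun hp h1 h2 => List.Perm.eq_of_pairwise' (r := (· ≤ ·)) h1 h2 hp) ?_ ?_ ?_
  · apply List.perm_of_nodup_nodup_toFinset_eq (Finset.sort_nodup _ _)
    · rw [List.nodup_append]
      refine ⟨Finset.sort_nodup _ _, Finset.sort_nodup _ _, ?_⟩
      intro x hx y hy hxy
      subst hxy
      have hx' : x ∈ D₁ := (Finset.mem_sort _).1 hx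
      have hy' : x ∈ D₂ := (Finset.mem_sort _).1 hy
      exact lt_irrefl x (h x hx' x hy')
    · simp [List.toFinset_append]
  · exact Finset.pairwise_sort _ _
  · rw [List.pairwise_append]
    refine ⟨Finset.pairwise_sort _ _, Finset.pairwise_sort _ _, ?_⟩
    intro x hx y hy
    exact le_of_lt (h x ((Finset.mem_sort _).1 hx) y ((Finset.mem_sort _).1 hy))

lemma etaDN_union {D₁ D₂ : Finset ℕ} (h : ∀ x ∈ D₁, ∀ y ∈ D₂, x < y) :
    etaDN R (D₁ ∪ D₂) = etaDN R D₁ * etaDN R D₂ := by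
  rw [etaDN, sort_union h, List.map_append, List.prod_append]; rfl

lemma etaN_mul_etaDN {a : ℕ} {A : Finset ℕ} (h : ∀ x ∈ A, a < x) :
    etaN R a * etaDN R A = etaDN R (insert a A) := by
  rw [Finset.insert_eq, etaDN_union (by simpa using h), etaDN_singleton]

lemma Qexpand (f : ℕ → R) (D : Finset ℕ) :
    ((D.sort (· ≤ ·)).map
      (fun j => algebraMap R (ExteriorAlgebra R (ℕ → R)) (f j) + etaN R j)).prod
      = ∑ A ∈ D.powerset, (∏ j ∈ D \ A, f j) • etaDN R A := by
  induction D using Finset.induction_on_min with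
  | empty => simp [etaDN_empty]
  | insert a S ha IH =>
    have haS : a ∉ S := fun h => lt_irrefl a (ha a h)
    rw [Finset.sort_insert (· ≤ ·) (fun b hb => le_of_lt (ha b hb)) haS, List.map_cons,
      List.prod_cons, IH, Finset.sum_powerset_insert haS]
    rw [add_mul, Finset.mul_sum, Finset.mul_sum]
    congr 1
    · refine Finset.sum_congr rfl fun A hA => ?_
      have hAS : A ⊆ S := Finset.mem_powerset.1 hA
      have haA : a ∉ A := fun h => haS (hAS h)
      rw [← Algebra.smul_def, smul_smul, Finset.insert_sdiff_of_notMem _ haA,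
        Finset.prod_insert (by simp [haS])]
    · refine Finset.sum_congr rfl fun A hA => ?_
      have hAS : A ⊆ S := Finset.mem_powerset.1 hA
      have haA : a ∉ A := fun h => haS (hAS h)
      have h1 : insert a S \ insert a A = S \ A := by
        ext x
        simp only [Finset.mem_sdiff, Finset.mem_insert, not_or]
        constructor
        · rintro ⟨h1 | h1, h2, h3⟩
          · exact absurd h1 h2
          · exact ⟨h1, h3⟩
        · rintro ⟨h1, h2⟩
          exact ⟨Or.inr h1, fun he => haS (he ▸ h1), h2⟩
      rw [mul_smul_comm, etaN_mul_etaDN (fun x hx => ha x (hAS hx)), h1]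

end Aux

section Aux2
variable {R : Type*} [CommRing R] {γ : Type*} [AddCommMonoid γ]

lemma sum_powerset_union {u v : Finset ℕ} (h : Disjoint u v) (g : Finset ℕ → γ) :
    ∑ S ∈ (u ∪ v).powerset, g S = ∑ A ∈ u.powerset, ∑ B ∈ v.powerset, g (A ∪ B) := by
  classical
  induction u using Finset.induction generalizing g with
  | empty => simp
  | @insert a u' ha ih =>
    have hav : a ∉ v := Finset.disjoint_left.1 h (Finset.mem_insert_self a u')
    have hd' : Disjoint u' v := h.mono_left (Finset.subset_insert a u')
    have hauv : a ∉ u' ∪ v := by simp [ha, hav]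
    rw [Finset.insert_union, Finset.sum_powerset_insert hauv, ih hd' g,
      ih hd' (fun S => g (insert a S)), Finset.sum_powerset_insert ha]
    congr 1
    refine Finset.sum_congr rfl fun A _ => Finset.sum_congr rfl fun B _ => ?_
    rw [Finset.insert_union]

lemma sum_powerset_if {C D : Finset ℕ} (h : C ⊆ D) (g : Finset ℕ → γ) :
    ∑ A ∈ C.powerset, g A = ∑ A ∈ D.powerset, if A ⊆ C then g A else 0 := by
  classical
  rw [← Finset.sum_filter]
  congr 1
  ext A
  simp only [Finset.mem_filter, Finset.mem_powerset]
  exact ⟨fun hh => ⟨hh.trans h, hh⟩, fun hh => hh.2⟩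

lemma if_push (p : Prop) [Decidable p] {ι : Type*} (s : Finset ι) (F : ι → γ) :
    (if p then ∑ b ∈ s, F b else 0) = ∑ b ∈ s, if p then F b else 0 := by
  split_ifs <;> simp

lemma if_smul' (p : Prop) [Decidable p] (a : R) (v : ExteriorAlgebra R (ℕ → R)) :
    (if p then a • v else 0) = (if p then a else 0) • v := by
  split_ifs <;> simp

lemma if_and_merge (p q : Prop) [Decidable p] [Decidable q] (x : γ) :
    (if p then (if q then x else 0) else 0) = if p ∧ q then x else 0 := by
  split_ifs <;> simp_all

/-- rank facts -/
lemma rkF_insert_of_le {a x : ℕ} (C : Finset ℕ) (haC : a ∉ C) (hax : a ≤ x) :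
    rkF (insert a C) x = rkF C x + 1 := by
  classical
  rw [rkF, Finset.filter_insert, if_pos hax, Finset.card_insert_of_notMem (by simp [haC]), rkF]

lemma rkF_self_of_lt {a : ℕ} (C : Finset ℕ) (ha : ∀ y ∈ C, a < y) :
    rkF (insert a C) a = 1 := by
  classical
  have h0 : C.filter (· ≤ a) = ∅ := by
    rw [Finset.filter_eq_empty_iff]
    intro y hy
    exact (ha y hy).not_ge
  rw [rkF, Finset.filter_insert, if_pos (le_refl a), h0]
  simp

lemma rkF_le_card (C : Finset ℕ) (x : ℕ) : rkF C x ≤ C.card :=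
  Finset.card_filter_le _ _

lemma rkF_pos_of_mem {C : Finset ℕ} {x : ℕ} (hx : x ∈ C) : 1 ≤ rkF C x := by
  rw [rkF]
  exact Finset.card_pos.2 ⟨x, Finset.mem_filter.2 ⟨hx, by simp⟩⟩

lemma rkF_union_high {C M : Finset ℕ} {x : ℕ} (h : ∀ y ∈ M, x < y) :
    rkF (C ∪ M) x = rkF C x := by
  classical
  rw [rkF, Finset.filter_union, rkF]
  have : M.filter (· ≤ x) = ∅ := by
    rw [Finset.filter_eq_empty_iff]
    intro y hy
    simpa using (h y hy).not_ge
  rw [this, Finset.union_empty]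

lemma rkF_union_low {C M : Finset ℕ} {x : ℕ} (h : ∀ y ∈ C, y ≤ x) (hd : Disjoint C M) :
    rkF (C ∪ M) x = C.card + rkF M x := by
  classical
  rw [rkF, Finset.filter_union, Finset.card_union_of_disjoint
    (hd.mono (Finset.filter_subset _ _) (Finset.filter_subset _ _)),
    Finset.filter_true_of_mem (by intro y hy; simpa using h y hy), rkF]

lemma rkF_strictmono {D : Finset ℕ} {x y : ℕ} (hy : y ∈ D) (hxy : x < y) :
    rkF D x < rkF D y := by
  classical
  have hsub : D.filter (· ≤ x) ⊆ D.filter (· ≤ y) := by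
    intro z hz
    rw [Finset.mem_filter] at *
    exact ⟨hz.1, le_trans hz.2 hxy.le⟩
  refine Finset.card_lt_card ?_
  rw [Finset.ssubset_iff_of_subset hsub]
  exact ⟨y, Finset.mem_filter.2 ⟨hy, le_refl y⟩,
    fun hmem => (Finset.mem_filter.1 hmem).2.not_gt hxy⟩

end Aux2

section Aux3
variable {R : Type*} [CommRing R]

def ttl (t : ℕ → R) (w : ℕ) : ℕ → List ℕ → R
  | _, [] => 1
  | d, s :: l => (t s - t (1 + s + w - d)) * ttl t w (d - 1) l

@[simp] lemma ttl_nil (t : ℕ → R) (w d : ℕ) : ttl t w d [] = 1 := rfl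

lemma ttl_cons (t : ℕ → R) (w d s : ℕ) (l : List ℕ) :
    ttl t w d (s :: l) = (t s - t (1 + s + w - d)) * ttl t w (d - 1) l := rfl

lemma ttl_shift (t : ℕ → R) (l : List ℕ) : ∀ (d w : ℕ), l.length ≤ d →
    ttl t (w + 1) (d + 1) l = ttl t w d l := by
  induction l with
  | nil => intros; rfl
  | cons s l ih =>
    intro d w h
    simp only [List.length_cons] at h
    obtain ⟨d', rfl⟩ : ∃ d', d = d' + 1 := ⟨d - 1, by omega⟩
    rw [ttl_cons, ttl_cons, show d' + 1 + 1 - 1 = d' + 1 from rfl,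
      show d' + 1 - 1 = d' from rfl, ih d' w (by omega)]
    have he : 1 + s + (w + 1) - (d' + 1 + 1) = 1 + s + w - (d' + 1) := by omega
    rw [he]

lemma prod_Icc_one (N : ℕ) (F : ℕ → R) :
    ∏ j ∈ Finset.Icc 1 N, F j = ∏ i ∈ Finset.range N, F (i + 1) := by
  induction N with
  | zero => simp
  | succ n ih =>
    have h1 : Finset.Icc 1 (n + 1) = insert (n + 1) (Finset.Icc 1 n) := by
      ext x; simp [Finset.mem_Icc]; omega
    rw [Finset.prod_range_succ, ← ih, h1,
      Finset.prod_insert (by simp [Finset.mem_Icc]), mul_comm]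

lemma ttl_eq_prod (t : ℕ → R) (l : List ℕ) : ∀ d w, l.length ≤ d →
    ttl t w d l
      = ∏ i ∈ Finset.range l.length,
          (t (l.getD i 0) - t ((i + 1) + l.getD i 0 + w - d)) := by
  induction l with
  | nil => intros; simp
  | cons s l ih =>
    intro d w h
    simp only [List.length_cons] at h ⊢
    obtain ⟨d', rfl⟩ : ∃ d', d = d' + 1 := ⟨d - 1, by omega⟩
    rw [Finset.prod_range_succ', ttl_cons, show d' + 1 - 1 = d' from rfl, ih d' w (by omega),
      mul_comm]
    congr 1
    · refine Finset.prod_congr rfl fun i hi => ?_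
      simp only [List.getD_cons_succ]
      have he : (i + 1 + 1) + l.getD i 0 + w - (d' + 1) = (i + 1) + l.getD i 0 + w - d' := by
        omega
      rw [he]

lemma sorted_gt_getD : ∀ (l : List ℕ), l.Pairwise (· > ·) → (∀ x ∈ l, 1 ≤ x) →
    ∀ i, i < l.length → l.length - i ≤ l.getD i 0 := by
  intro l
  induction l with
  | nil => intro _ _ i hi; simp at hi
  | cons a l ih =>
    intro hs hp i hi
    have hs' := (List.pairwise_cons.1 hs).2
    have hp' : ∀ x ∈ l, 1 ≤ x := fun x hx => hp x (by simp [hx])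
    cases i with
    | zero =>
      simp only [List.getD_cons_zero, List.length_cons]
      cases l with
      | nil => simpa using hp a (by simp)
      | cons b l' =>
        have hab : b < a := (List.pairwise_cons.1 hs).1 b (by simp)
        have h2 := ih hs' hp' 0 (by simp)
        simp only [List.getD_cons_zero, List.length_cons] at h2 ⊢
        omega
    | succ i' =>
      simp only [List.getD_cons_succ, List.length_cons]
      have h2 := ih hs' hp' i' (by simpa using hi)
      omega

lemma refineDes_subset_Icc {S C : Finset ℕ} (hC : C ⊆ S) :
    refineDes S C ⊆ Finset.Icc 1 S.card := by
  intro r hr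
  obtain ⟨c, hc, rfl⟩ := Finset.mem_image.1 hr
  rw [Finset.mem_Icc]
  exact ⟨rkF_pos_of_mem (hC hc), rkF_le_card _ _⟩

lemma card_refineDes {S C : Finset ℕ} (hC : C ⊆ S) : (refineDes S C).card = C.card := by
  rw [refineDes]
  apply Finset.card_image_of_injOn
  intro x hx y hy hxy
  by_contra hne
  rcases lt_or_gt_of_ne hne with h | h
  · exact absurd hxy (rkF_strictmono (hC hy) h).ne
  · exact absurd hxy.symm (rkF_strictmono (hC hx) h).ne

lemma conj_image_subset {d : ℕ} {T : Finset ℕ} (hT : T ⊆ Finset.Icc 1 d) :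
    T.image (fun x => (d + 1) - x) ⊆ Finset.Icc 1 d := by
  intro y hy
  obtain ⟨x, hx, rfl⟩ := Finset.mem_image.1 hy
  have := Finset.mem_Icc.1 (hT hx)
  rw [Finset.mem_Icc]
  omega

lemma card_conj_image {d : ℕ} {T : Finset ℕ} (hT : T ⊆ Finset.Icc 1 d) :
    (T.image (fun x => (d + 1) - x)).card = T.card := by
  apply Finset.card_image_of_injOn
  intro x hx y hy hxy
  have hxy' : d + 1 - x = d + 1 - y := hxy
  have h1 := Finset.mem_Icc.1 (hT hx)
  have h2 := Finset.mem_Icc.1 (hT hy)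
  omega

lemma sListQ_length {D C : Finset ℕ} (hC : C ⊆ D) :
    (sListQ D C).length = D.card - C.card := by
  rw [sListQ, List.length_reverse, Finset.length_sort, conjDes]
  have h1 : (D.card + 1) - 1 = D.card := by omega
  rw [h1]
  have hT := refineDes_subset_Icc hC
  have himg : (refineDes D C).image (fun x => (D.card + 1) - x) ⊆ Finset.Icc 1 D.card :=
    conj_image_subset hT
  rw [Finset.card_sdiff_of_subset himg, card_conj_image hT, card_refineDes hC, Nat.card_Icc]
  omega

lemma sListQ_sorted (D C : Finset ℕ) : (sListQ D C).Pairwise (· > ·) := by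
  rw [sListQ, List.pairwise_reverse]
  exact (Finset.sortedLT_sort _).pairwise

lemma sListQ_pos (D C : Finset ℕ) : ∀ x ∈ sListQ D C, 1 ≤ x := by
  intro x hx
  rw [sListQ, List.mem_reverse] at hx
  have h := (Finset.mem_sort _).1 hx
  rw [conjDes, Finset.mem_sdiff, Finset.mem_Icc] at h
  exact h.1.1

end Aux3

section Aux4
variable {R : Type*} [CommRing R]

lemma refineDes_insert_not {a : ℕ} {S C : Finset ℕ} (ha : ∀ x ∈ S, a < x) (hC : C ⊆ S) :
    refineDes (insert a S) C = (refineDes S C).image (· + 1) := by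
  classical
  rw [refineDes, refineDes, Finset.image_image]
  apply Finset.image_congr
  intro c hc
  have haS : a ∉ S := fun h => lt_irrefl a (ha a h)
  simp only [Function.comp_apply]
  rw [Finset.filter_insert, if_pos (ha c (hC hc)).le,
    Finset.card_insert_of_notMem (by simp [haS])]

lemma refineDes_insert_mem {a : ℕ} {S C : Finset ℕ} (ha : ∀ x ∈ S, a < x) (hC : C ⊆ S) :
    refineDes (insert a S) (insert a C) = insert 1 ((refineDes S C).image (· + 1)) := by
  classical
  rw [refineDes, Finset.image_insert]
  have h1 : ((insert a S).filter (· ≤ a)).card = 1 := rkF_self_of_lt S ha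
  rw [h1, ← refineDes, refineDes_insert_not ha hC]

lemma conjDes_insert_not (d : ℕ) (T : Finset ℕ) (hT : T ⊆ Finset.Icc 1 d) :
    conjDes (d + 2) (T.image (· + 1)) = insert (d + 1) (conjDes (d + 1) T) := by
  classical
  rw [conjDes, conjDes, Finset.image_image]
  have himg : T.image ((fun x => d + 2 - x) ∘ (· + 1)) = T.image (fun x => (d + 1) - x) :=
    Finset.image_congr (fun x hx => by simp only [Function.comp_apply]; omega)
  rw [himg]
  have h2 : Finset.Icc 1 (d + 2 - 1) = insert (d + 1) (Finset.Icc 1 (d + 1 - 1)) := by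
    ext x; simp only [Finset.mem_Icc, Finset.mem_insert]; omega
  rw [h2, Finset.insert_sdiff_of_notMem]
  intro hmem
  have := Finset.mem_Icc.1 (conj_image_subset hT hmem)
  omega

lemma conjDes_insert_mem (d : ℕ) (T : Finset ℕ) (hT : T ⊆ Finset.Icc 1 d) :
    conjDes (d + 2) (insert 1 (T.image (· + 1))) = conjDes (d + 1) T := by
  classical
  rw [conjDes, conjDes, Finset.image_insert, Finset.image_image]
  have himg : T.image ((fun x => d + 2 - x) ∘ (· + 1)) = T.image (fun x => (d + 1) - x) :=
    Finset.image_congr (fun x hx => by simp only [Function.comp_apply]; omega)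
  rw [himg]
  have h1 : d + 2 - 1 = d + 1 := rfl
  ext x
  simp only [Finset.mem_sdiff, Finset.mem_Icc, Finset.mem_insert, not_or]
  constructor
  · rintro ⟨⟨hx1, hx2⟩, hx3, hx4⟩
    exact ⟨⟨hx1, by omega⟩, hx4⟩
  · rintro ⟨⟨hx1, hx2⟩, hx3⟩
    refine ⟨⟨hx1, by omega⟩, by omega, hx3⟩

lemma sListQ_insert_not {a : ℕ} {S C : Finset ℕ} (ha : ∀ x ∈ S, a < x) (hC : C ⊆ S) :
    sListQ (insert a S) C = (S.card + 1) :: sListQ S C := by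
  classical
  have haS : a ∉ S := fun h => lt_irrefl a (ha a h)
  rw [sListQ, sListQ, Finset.card_insert_of_notMem haS, refineDes_insert_not ha hC,
    show S.card + 1 + 1 = S.card + 2 from rfl,
    conjDes_insert_not S.card _ (refineDes_subset_Icc hC)]
  have hO : conjDes (S.card + 1) (refineDes S C) ⊆ Finset.Icc 1 S.card := by
    intro x hx
    rw [conjDes, Finset.mem_sdiff] at hx
    have := hx.1
    simpa using this
  have hins : insert (S.card + 1) (conjDes (S.card + 1) (refineDes S C))
      = conjDes (S.card + 1) (refineDes S C) ∪ {S.card + 1} := by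
    rw [Finset.union_comm, ← Finset.insert_eq]
  rw [hins, sort_union (by
    intro x hx y hy
    simp only [Finset.mem_singleton] at hy
    subst hy
    have := Finset.mem_Icc.1 (hO hx)
    omega), Finset.sort_singleton, List.reverse_append]
  simp

lemma sListQ_insert_mem {a : ℕ} {S C : Finset ℕ} (ha : ∀ x ∈ S, a < x) (hC : C ⊆ S) :
    sListQ (insert a S) (insert a C) = sListQ S C := by
  classical
  have haS : a ∉ S := fun h => lt_irrefl a (ha a h)
  rw [sListQ, sListQ, Finset.card_insert_of_notMem haS, refineDes_insert_mem ha hC,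
    show S.card + 1 + 1 = S.card + 2 from rfl,
    conjDes_insert_mem S.card _ (refineDes_subset_Icc hC)]

lemma cvalP_insert_min {a x : ℕ} {S : Finset ℕ} (ha : ∀ y ∈ S, a < y) (hx : x ∈ S) :
    cvalP (insert a S) x = cvalP S x := by
  classical
  have haS : a ∉ S := fun h => lt_irrefl a (ha a h)
  rw [cvalP_eq, cvalP_eq, Finset.card_insert_of_notMem haS,
    rkF_insert_of_le S haS (ha x hx).le]
  have h1 : rkF S x ≤ S.card := rkF_le_card S x
  omega

lemma cvalP_insert_min_self {a : ℕ} {S : Finset ℕ} (ha : ∀ y ∈ S, a < y) :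
    cvalP (insert a S) a = S.card + 1 := by
  classical
  have haS : a ∉ S := fun h => lt_irrefl a (ha a h)
  rw [cvalP_eq, Finset.card_insert_of_notMem haS, rkF_self_of_lt S ha]
  omega

/-- Bridge: `prodTermQ` with the `sListQ` list equals `ttl`. -/
lemma prodTermQ_eq_ttl (t : ℕ → R) {D C : Finset ℕ} (hC : C ⊆ D) (e off : ℕ)
    (hoff : off ≤ e + 1) :
    prodTermQ t (D.card + 1) (C.card + 1) (e + 1) (sListQ D C) off
      = ttl t ((e + 1 - off) + C.card) D.card (sListQ D C) := by
  classical
  have hcd : C.card ≤ D.card := Finset.card_le_card hC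
  have hlen : (sListQ D C).length = D.card - C.card := sListQ_length hC
  have hbd : ∀ i, i < (sListQ D C).length →
      (sListQ D C).length - i ≤ (sListQ D C).getD i 0 :=
    sorted_gt_getD _ (sListQ_sorted D C) (sListQ_pos D C)
  rw [prodTermQ, if_pos]
  · rw [show (D.card + 1) - (C.card + 1) = D.card - C.card from by omega,
      ← hlen, prod_Icc_one, ttl_eq_prod t _ D.card _ (by omega)]
    refine Finset.prod_congr rfl fun i hi => ?_
    rw [Finset.mem_range] at hi
    have hb := hbd i hi
    have hgd : (sListQ D C).getD (i + 1 - 1) 0 = (sListQ D C).getD i 0 := by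
      rw [show i + 1 - 1 = i from rfl]
    rw [hgd]
    have he : i + 1 + (sListQ D C).getD i 0 + (e + 1) + (C.card + 1) - (D.card + 1) - off
        = (i + 1) + (sListQ D C).getD i 0 + ((e + 1 - off) + C.card) - D.card := by
      rw [hlen] at hi hb
      omega
    rw [he]
  · intro j hj
    rw [Finset.mem_Icc] at hj
    rw [show (D.card + 1) - (C.card + 1) = D.card - C.card from by omega] at hj
    have hb := hbd (j - 1) (by omega)
    rw [hlen] at hb
    omega

end Aux4

section Aux5
variable {R : Type*} [CommRing R]

/-- The core scalar identity, proven by induction removing the minimum. -/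
lemma coreQ (t : ℕ → R) (q : ℕ) (D : Finset ℕ) :
    ∀ A, A ⊆ D →
      ∏ x ∈ D \ A, t (cvalP D x)
        = ∑ C ∈ D.powerset,
            (if A ⊆ C then
              ttl t (q + C.card) D.card (sListQ D C)
                * ∏ x ∈ C \ A, t (C.card + 1 + q - rkF C x)
            else 0) := by
  classical
  induction D using Finset.induction_on_min with
  | empty =>
    intro A hA
    rw [Finset.subset_empty.1 hA]
    simp [sListQ, refineDes, conjDes]
  | insert a S ha IH =>
    intro A hA
    have haS : a ∉ S := fun h => lt_irrefl a (ha a h)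
    have hcards : (insert a S).card = S.card + 1 := Finset.card_insert_of_notMem haS
    rw [Finset.sum_powerset_insert haS]
    by_cases haA : a ∈ A
    · -- a ∈ A : only subsets containing a contribute
      set A' := A.erase a with hA'def
      have hAi : A = insert a A' := (Finset.insert_erase haA).symm
      have hA'S : A' ⊆ S := by
        intro x hx
        have hxa : x ≠ a := Finset.ne_of_mem_erase hx
        rcases Finset.mem_insert.1 (hA (Finset.mem_of_mem_erase hx)) with h | h
        · exact absurd h hxa
        · exact h
      have haA' : a ∉ A' := Finset.notMem_erase a A
      have hz : (∑ C ∈ S.powerset,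
          (if A ⊆ C then
            ttl t (q + C.card) (insert a S).card (sListQ (insert a S) C)
              * ∏ x ∈ C \ A, t (C.card + 1 + q - rkF C x)
          else 0)) = 0 := by
        refine Finset.sum_eq_zero fun C hC => ?_
        have hCS : C ⊆ S := Finset.mem_powerset.1 hC
        have : ¬ A ⊆ C := fun hsub => haS (hCS (hsub haA))
        rw [if_neg this]
      rw [hz, zero_add]
      have hLHS : insert a S \ A = S \ A' := by
        ext x
        simp only [Finset.mem_sdiff, Finset.mem_insert]
        constructor
        · rintro ⟨h1 | h1, h2⟩
          · exact absurd (h1 ▸ haA) h2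
          · exact ⟨h1, fun hx => h2 (Finset.mem_of_mem_erase hx)⟩
        · rintro ⟨h1, h2⟩
          refine ⟨Or.inr h1, fun hx => ?_⟩
          have hxa : x ≠ a := fun he => haS (he ▸ h1)
          exact h2 (Finset.mem_erase.2 ⟨hxa, hx⟩)
      have hLv : ∀ x ∈ S \ A', t (cvalP (insert a S) x) = t (cvalP S x) := fun x hx => by
        rw [cvalP_insert_min ha (Finset.mem_sdiff.1 hx).1]
      rw [hLHS, Finset.prod_congr rfl hLv, IH A' hA'S]
      refine Finset.sum_congr rfl fun C hC => ?_
      have hCS : C ⊆ S := Finset.mem_powerset.1 hC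
      have haC : a ∉ C := fun h => haS (hCS h)
      have hcond : (A ⊆ insert a C) ↔ (A' ⊆ C) := by
        constructor
        · intro h x hx
          have hxa : x ≠ a := Finset.ne_of_mem_erase hx
          rcases Finset.mem_insert.1 (h (Finset.mem_of_mem_erase hx)) with h1 | h1
          · exact absurd h1 hxa
          · exact h1
        · intro h x hx
          rw [hAi] at hx
          rcases Finset.mem_insert.1 hx with h1 | h1
          · exact h1 ▸ Finset.mem_insert_self a C
          · exact Finset.mem_insert_of_mem (h h1)
      by_cases hc : A' ⊆ C
      · rw [if_pos (hcond.2 hc), if_pos hc]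
        have hcc : (insert a C).card = C.card + 1 := Finset.card_insert_of_notMem haC
        have hset : insert a C \ A = C \ A' := by
          ext x
          simp only [Finset.mem_sdiff, Finset.mem_insert]
          constructor
          · rintro ⟨h1 | h1, h2⟩
            · exact absurd (h1 ▸ haA) h2
            · exact ⟨h1, fun hx => h2 (Finset.mem_of_mem_erase hx)⟩
          · rintro ⟨h1, h2⟩
            refine ⟨Or.inr h1, fun hx => ?_⟩
            have hxa : x ≠ a := fun he => haC (he ▸ h1)
            exact h2 (Finset.mem_erase.2 ⟨hxa, hx⟩)
        rw [hcc, hcards, sListQ_insert_mem ha hCS,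
          show q + (C.card + 1) = (q + C.card) + 1 from rfl,
          ttl_shift t _ S.card (q + C.card) (by rw [sListQ_length hCS]; omega), hset]
        congr 1
        refine Finset.prod_congr rfl fun x hx => ?_
        have hxC : x ∈ C := (Finset.mem_sdiff.1 hx).1
        rw [rkF_insert_of_le C haC (ha x (hCS hxC)).le]
        have : C.card + 1 + 1 + q - (rkF C x + 1) = C.card + 1 + q - rkF C x := by omega
        rw [this]
      · rw [if_neg (fun h => hc (hcond.1 h)), if_neg hc]
    · -- a ∉ A
      have hAS : A ⊆ S := by
        intro x hx
        rcases Finset.mem_insert.1 (hA hx) with h | h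
        · exact absurd (h ▸ hx) haA
        · exact h
      have hLHS : insert a S \ A = insert a (S \ A) := Finset.insert_sdiff_of_notMem _ haA
      have haSA : a ∉ S \ A := fun h => haS (Finset.mem_sdiff.1 h).1
      rw [hLHS, Finset.prod_insert haSA, cvalP_insert_min_self ha,
        Finset.prod_congr rfl
          (fun x hx => by rw [cvalP_insert_min ha (Finset.mem_sdiff.1 hx).1]),
        IH A hAS]
      have h1 : ∀ C ∈ S.powerset,
          (if A ⊆ C then
            ttl t (q + C.card) (insert a S).card (sListQ (insert a S) C)
              * ∏ x ∈ C \ A, t (C.card + 1 + q - rkF C x)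
          else 0)
          = (if A ⊆ C then
              (t (S.card + 1) - t (q + C.card + 1)) *
                (ttl t (q + C.card) S.card (sListQ S C)
                  * ∏ x ∈ C \ A, t (C.card + 1 + q - rkF C x))
            else 0) := by
        intro C hC
        have hCS := Finset.mem_powerset.1 hC
        by_cases hc : A ⊆ C
        · rw [if_pos hc, if_pos hc, hcards, sListQ_insert_not ha hCS, ttl_cons,
            show S.card + 1 - 1 = S.card from rfl]
          have he : 1 + (S.card + 1) + (q + C.card) - (S.card + 1) = q + C.card + 1 := by omega
          rw [he, mul_assoc]
        · rw [if_neg hc, if_neg hc]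
      have h2 : ∀ C ∈ S.powerset,
          (if A ⊆ insert a C then
            ttl t (q + (insert a C).card) (insert a S).card (sListQ (insert a S) (insert a C))
              * ∏ x ∈ insert a C \ A, t ((insert a C).card + 1 + q - rkF (insert a C) x)
          else 0)
          = (if A ⊆ C then
              t (q + C.card + 1) *
                (ttl t (q + C.card) S.card (sListQ S C)
                  * ∏ x ∈ C \ A, t (C.card + 1 + q - rkF C x))
            else 0) := by
        intro C hC
        have hCS := Finset.mem_powerset.1 hC
        have haC : a ∉ C := fun h => haS (hCS h)
        have hcond : (A ⊆ insert a C) ↔ (A ⊆ C) := by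
          constructor
          · intro h x hx
            rcases Finset.mem_insert.1 (h hx) with h1 | h1
            · exact absurd (h1 ▸ hx) haA
            · exact h1
          · exact fun h => h.trans (Finset.subset_insert a C)
        by_cases hc : A ⊆ C
        · rw [if_pos (hcond.2 hc), if_pos hc]
          have hcc : (insert a C).card = C.card + 1 := Finset.card_insert_of_notMem haC
          rw [hcc, hcards, sListQ_insert_mem ha hCS,
            show q + (C.card + 1) = (q + C.card) + 1 from rfl,
            ttl_shift t (sListQ S C) S.card (q + C.card) (by rw [sListQ_length hCS]; omega)]
          have hset : insert a C \ A = insert a (C \ A) :=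
            Finset.insert_sdiff_of_notMem _ haA
          have haCA : a ∉ C \ A := fun h => haC (Finset.mem_sdiff.1 h).1
          rw [hset, Finset.prod_insert haCA, rkF_self_of_lt C (fun y hy => ha y (hCS hy))]
          have he : C.card + 1 + 1 + q - 1 = q + C.card + 1 := by omega
          rw [he]
          have hprod : ∏ x ∈ C \ A, t (C.card + 1 + 1 + q - rkF (insert a C) x)
              = ∏ x ∈ C \ A, t (C.card + 1 + q - rkF C x) := by
            refine Finset.prod_congr rfl fun x hx => ?_
            have hxC : x ∈ C := (Finset.mem_sdiff.1 hx).1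
            rw [rkF_insert_of_le C haC (ha x (hCS hxC)).le]
            have h3 : C.card + 1 + 1 + q - (rkF C x + 1) = C.card + 1 + q - rkF C x := by
              omega
            rw [h3]
          rw [hprod]
          ring
        · rw [if_neg (fun h => hc (hcond.1 h)), if_neg hc]
      rw [Finset.sum_congr rfl h1, Finset.sum_congr rfl h2, ← Finset.sum_add_distrib,
        Finset.mul_sum]
      refine Finset.sum_congr rfl fun C hC => ?_
      by_cases hc : A ⊆ C
      · rw [if_pos hc, if_pos hc, if_pos hc]
        ring
      · rw [if_neg hc, if_neg hc, if_neg hc]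
        ring
end Aux5

section Aux6
variable {R : Type*} [CommRing R]

lemma wsplit (t : ℕ → R) {C Mf A B : Finset ℕ} (hsep : ∀ x ∈ C, ∀ y ∈ Mf, x < y)
    (hA : A ⊆ C) (hB : B ⊆ Mf) :
    ∏ j ∈ (C ∪ Mf) \ (A ∪ B), t (cvalP (C ∪ Mf) j)
      = (∏ x ∈ C \ A, t (C.card + 1 + Mf.card - rkF C x)) *
          ∏ y ∈ Mf \ B, t (cvalP Mf y) := by
  classical
  have hd : Disjoint C Mf :=
    Finset.disjoint_left.2 fun {x} hx hy => lt_irrefl x (hsep x hx x hy)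
  have hsd : (C ∪ Mf) \ (A ∪ B) = (C \ A) ∪ (Mf \ B) := by
    ext x
    simp only [Finset.mem_sdiff, Finset.mem_union, not_or]
    constructor
    · rintro ⟨h1 | h1, h2, h3⟩
      · exact Or.inl ⟨h1, h2⟩
      · exact Or.inr ⟨h1, h3⟩
    · rintro (⟨h1, h2⟩ | ⟨h1, h2⟩)
      · exact ⟨Or.inl h1, h2, fun hb => lt_irrefl x (hsep x h1 x (hB hb))⟩
      · exact ⟨Or.inr h1, fun ha2 => lt_irrefl x (hsep x (hA ha2) x h1), h2⟩
  have hdd : Disjoint (C \ A) (Mf \ B) := hd.mono Finset.sdiff_subset Finset.sdiff_subset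
  rw [hsd, Finset.prod_union hdd]
  congr 1
  · refine Finset.prod_congr rfl fun x hx => ?_
    have hxC : x ∈ C := (Finset.mem_sdiff.1 hx).1
    rw [cvalP_eq, Finset.card_union_of_disjoint hd,
      rkF_union_high (fun y hy => hsep x hxC y hy)]
    congr 1
    omega
  · refine Finset.prod_congr rfl fun y hy => ?_
    have hyM : y ∈ Mf := (Finset.mem_sdiff.1 hy).1
    rw [cvalP_eq, cvalP_eq, Finset.card_union_of_disjoint hd,
      rkF_union_low (fun x hx => (hsep x hx y hyM).le) hd]
    congr 1
    omega

lemma mcoef (t : ℕ → R) {m : ℕ} {E' B : Finset ℕ} (hgt : ∀ y ∈ E', m < y)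
    (hB : B ⊆ insert m E') :
    ∏ y ∈ (insert m E') \ B, t (cvalP (insert m E') y)
      = (if m ∈ B then 1 else t (E'.card + 1)) *
        ∏ j ∈ (insert m E') \ B, (if j = m then 1 else t (cvalP E' j)) := by
  classical
  have hmE' : m ∉ E' := fun h => lt_irrefl m (hgt m h)
  by_cases hmB : m ∈ B
  · rw [if_pos hmB, one_mul]
    refine Finset.prod_congr rfl fun y hy => ?_
    have h1 := Finset.mem_sdiff.1 hy
    have hym : y ≠ m := fun he => h1.2 (he ▸ hmB)
    have hyE : y ∈ E' := by
      rcases Finset.mem_insert.1 h1.1 with h | h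
      · exact absurd h hym
      · exact h
    rw [if_neg hym, cvalP_insert_min hgt hyE]
  · rw [if_neg hmB]
    have hset : (insert m E') \ B = insert m (E' \ B) :=
      Finset.insert_sdiff_of_notMem _ hmB
    have hm2 : m ∉ E' \ B := fun h => hmE' (Finset.mem_sdiff.1 h).1
    rw [hset, Finset.prod_insert hm2, Finset.prod_insert hm2, if_pos rfl, one_mul,
      cvalP_insert_min_self hgt]
    congr 1
    refine Finset.prod_congr rfl fun y hy => ?_
    have hyE : y ∈ E' := (Finset.mem_sdiff.1 hy).1
    have hym : y ≠ m := fun he => hmE' (he ▸ hyE)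
    rw [if_neg hym, cvalP_insert_min hgt hyE]

lemma mcoef2 (t : ℕ → R) {m : ℕ} {E' B : Finset ℕ} (hgt : ∀ y ∈ E', m < y)
    (hB : B ⊆ E') :
    ∏ j ∈ (insert m E') \ B, (if j = m then 1 else t (cvalP E' j))
      = ∏ y ∈ E' \ B, t (cvalP E' y) := by
  classical
  have hmE' : m ∉ E' := fun h => lt_irrefl m (hgt m h)
  have hmB : m ∉ B := fun h => hmE' (hB h)
  have hset : (insert m E') \ B = insert m (E' \ B) :=
    Finset.insert_sdiff_of_notMem _ hmB
  have hm2 : m ∉ E' \ B := fun h => hmE' (Finset.mem_sdiff.1 h).1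
  rw [hset, Finset.prod_insert hm2, if_pos rfl, one_mul]
  refine Finset.prod_congr rfl fun y hy => ?_
  have hyE : y ∈ E' := (Finset.mem_sdiff.1 hy).1
  have hym : y ≠ m := fun he => hmE' (he ▸ hyE)
  rw [if_neg hym]

end Aux6

/-- the multiparameter product rule for the Hall–Littlewood
`𝒬`-basis, in the Grassmann model.  `I` is a composition of `m` with descent
set `DI`, `J` a composition of `n` with descent set `E`; the product of
`Sym_m × Sym_n → Sym_{m+n}` is realized by `x·(1+η_m)·shift_m(y)`, the shift
replacing each `η_k` of `𝒬'_J` by `η_{k+m}`.  Coarsenings `K ≤ I` correspond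
to subsets `C ⊆ DI`; `Des(K·J) = C ∪ (E+m) ∪ {m}` and `Des(K▷J) = C ∪ (E+m)`;
`ℓ(I) = DI.card + 1`, `ℓ(K) = C.card + 1`, `ℓ(J) = E.card + 1`. -/
theorem stmt_17 {R : Type*} [CommRing R] (t : ℕ → R) (m n : ℕ) (hm : 0 < m) (hn : 0 < n)
    (DI E : Finset ℕ) (hDI : DI ⊆ Finset.Icc 1 (m-1)) (hE : E ⊆ Finset.Icc 1 (n-1)) :
    Qp R t DI * ((1 + etaN R m) * Qp R t (E.image (· + m))) =
      ∑ C ∈ DI.powerset,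
        (prodTermQ t (DI.card + 1) (C.card + 1) (E.card + 1) (sListQ DI C) 0 •
            Qp R t ((C ∪ E.image (· + m)) ∪ {m})
          + ((1 - t (E.card + 1)) *
              prodTermQ t (DI.card + 1) (C.card + 1) (E.card + 1) (sListQ DI C) 1) •
            Qp R t (C ∪ E.image (· + m))) := by
  classical
  set E' : Finset ℕ := E.image (· + m) with hE'def
  have hE'gt : ∀ y ∈ E', m < y := by
    intro y hy
    rw [hE'def] at hy
    obtain ⟨x, hx, rfl⟩ := Finset.mem_image.1 hy
    have := Finset.mem_Icc.1 (hE hx)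
    omega
  have hmE' : m ∉ E' := fun h => lt_irrefl m (hE'gt m h)
  have hDIlt : ∀ x ∈ DI, x < m := by
    intro x hx
    have := Finset.mem_Icc.1 (hDI hx)
    omega
  have hsep : ∀ x ∈ DI, ∀ y ∈ insert m E', x < y := by
    intro x hx y hy
    rcases Finset.mem_insert.1 hy with rfl | hy
    · exact hDIlt x hx
    · exact (hDIlt x hx).trans (hE'gt y hy)
  have hE'card : E'.card = E.card := by
    rw [hE'def]
    exact Finset.card_image_of_injective _ (add_left_injective m)
  have hMcard : (insert m E').card = E.card + 1 := by
    rw [Finset.card_insert_of_notMem hmE', hE'card]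
  -- LHS expansion
  have hQM : (1 + etaN R m) * Qp R t E'
      = ∑ B ∈ (insert m E').powerset,
          (∏ j ∈ (insert m E') \ B, (if j = m then 1 else t (cvalP E' j))) • etaDN R B := by
    rw [← Qexpand (fun j => if j = m then 1 else t (cvalP E' j)) (insert m E'),
      Finset.sort_insert (· ≤ ·) (fun b hb => (hE'gt b hb).le) hmE', List.map_cons,
      List.prod_cons]
    congr 1
    · rw [if_pos rfl, map_one]
    · rw [Qp]
      congr 1
      refine List.map_congr_left fun j hj => ?_
      have hjE : j ∈ E' := (Finset.mem_sort _).1 hj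
      have hjm : j ≠ m := fun he => hmE' (he ▸ hjE)
      rw [if_neg hjm]
  have hLHS : Qp R t DI * ((1 + etaN R m) * Qp R t E')
      = ∑ A ∈ DI.powerset, ∑ B ∈ (insert m E').powerset,
          ((∏ j ∈ DI \ A, t (cvalP DI j)) *
            ∏ j ∈ (insert m E') \ B, (if j = m then 1 else t (cvalP E' j)))
          • etaDN R (A ∪ B) := by
    rw [hQM, show Qp R t DI
        = ∑ A ∈ DI.powerset, (∏ j ∈ DI \ A, t (cvalP DI j)) • etaDN R A
      from Qexpand _ DI, Finset.sum_mul_sum]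
    refine Finset.sum_congr rfl fun A hA => Finset.sum_congr rfl fun B hB => ?_
    rw [smul_mul_smul_comm, etaDN_union (fun x hx y hy =>
      hsep x (Finset.mem_powerset.1 hA hx) y (Finset.mem_powerset.1 hB hy))]
  rw [hLHS]
  -- RHS per-C transformation
  have hterm : ∀ C ∈ DI.powerset,
      (prodTermQ t (DI.card + 1) (C.card + 1) (E.card + 1) (sListQ DI C) 0 •
          Qp R t ((C ∪ E') ∪ {m})
        + ((1 - t (E.card + 1)) *
            prodTermQ t (DI.card + 1) (C.card + 1) (E.card + 1) (sListQ DI C) 1) •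
          Qp R t (C ∪ E'))
      = ∑ A ∈ DI.powerset, ∑ B ∈ (insert m E').powerset,
          ((if A ⊆ C then
              prodTermQ t (DI.card + 1) (C.card + 1) (E.card + 1) (sListQ DI C) 0 *
                ∏ j ∈ (C ∪ insert m E') \ (A ∪ B), t (cvalP (C ∪ insert m E') j)
            else 0)
          + (if A ⊆ C ∧ B ⊆ E' then
              ((1 - t (E.card + 1)) *
                prodTermQ t (DI.card + 1) (C.card + 1) (E.card + 1) (sListQ DI C) 1) *
                ∏ j ∈ (C ∪ E') \ (A ∪ B), t (cvalP (C ∪ E') j)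
            else 0)) • etaDN R (A ∪ B) := by
    intro C hCp
    have hC : C ⊆ DI := Finset.mem_powerset.1 hCp
    have hsepC : ∀ x ∈ C, ∀ y ∈ insert m E', x < y := fun x hx => hsep x (hC hx)
    have hdCM : Disjoint C (insert m E') :=
      Finset.disjoint_left.2 fun {x} hx hy => lt_irrefl x (hsepC x hx x hy)
    have hsepCE : ∀ x ∈ C, ∀ y ∈ E', x < y := fun x hx y hy =>
      hsepC x hx y (Finset.mem_insert_of_mem hy)
    have hdCE : Disjoint C E' :=
      Finset.disjoint_left.2 fun {x} hx hy => lt_irrefl x (hsepCE x hx x hy)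
    have hset : (C ∪ E') ∪ {m} = C ∪ insert m E' := by
      rw [Finset.union_assoc, Finset.union_comm E' {m}, ← Finset.insert_eq]
    rw [hset,
      show Qp R t (C ∪ insert m E')
        = ∑ S ∈ (C ∪ insert m E').powerset,
            (∏ j ∈ (C ∪ insert m E') \ S, t (cvalP (C ∪ insert m E') j)) • etaDN R S
        from Qexpand _ _,
      show Qp R t (C ∪ E')
        = ∑ S ∈ (C ∪ E').powerset,
            (∏ j ∈ (C ∪ E') \ S, t (cvalP (C ∪ E') j)) • etaDN R S
        from Qexpand _ _,
      Finset.smul_sum, Finset.smul_sum]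
    simp only [smul_smul]
    rw [sum_powerset_union hdCM, sum_powerset_union hdCE]
    have hB2 : ∀ A : Finset ℕ,
        (∑ B ∈ E'.powerset,
          (((1 - t (E.card + 1)) *
              prodTermQ t (DI.card + 1) (C.card + 1) (E.card + 1) (sListQ DI C) 1) *
            ∏ j ∈ (C ∪ E') \ (A ∪ B), t (cvalP (C ∪ E') j)) • etaDN R (A ∪ B))
        = ∑ B ∈ (insert m E').powerset,
            if B ⊆ E' then
              (((1 - t (E.card + 1)) *
                prodTermQ t (DI.card + 1) (C.card + 1) (E.card + 1) (sListQ DI C) 1) *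
                ∏ j ∈ (C ∪ E') \ (A ∪ B), t (cvalP (C ∪ E') j)) • etaDN R (A ∪ B)
            else 0 :=
      fun A => sum_powerset_if (Finset.subset_insert m E') _
    simp only [hB2]
    rw [sum_powerset_if hC, sum_powerset_if hC, ← Finset.sum_add_distrib]
    refine Finset.sum_congr rfl fun A _ => ?_
    rw [if_push, if_push, ← Finset.sum_add_distrib]
    refine Finset.sum_congr rfl fun B _ => ?_
    rw [if_and_merge, if_smul', if_smul', ← add_smul]
  rw [Finset.sum_congr rfl hterm]
  conv_rhs => rw [Finset.sum_comm]
  refine Finset.sum_congr rfl fun A hA => ?_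
  conv_rhs => rw [Finset.sum_comm]
  refine Finset.sum_congr rfl fun B hB => ?_
  rw [← Finset.sum_smul]
  congr 1
  -- the scalar identity
  have hA' : A ⊆ DI := Finset.mem_powerset.1 hA
  have hB' : B ⊆ insert m E' := Finset.mem_powerset.1 hB
  have hcoef : ∀ C ∈ DI.powerset,
      ((if A ⊆ C then
          prodTermQ t (DI.card + 1) (C.card + 1) (E.card + 1) (sListQ DI C) 0 *
            ∏ j ∈ (C ∪ insert m E') \ (A ∪ B), t (cvalP (C ∪ insert m E') j)
        else 0)
      + (if A ⊆ C ∧ B ⊆ E' then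
          ((1 - t (E.card + 1)) *
            prodTermQ t (DI.card + 1) (C.card + 1) (E.card + 1) (sListQ DI C) 1) *
            ∏ j ∈ (C ∪ E') \ (A ∪ B), t (cvalP (C ∪ E') j)
        else 0))
      = (if A ⊆ C then
          (ttl t (E.card + 1 + C.card) DI.card (sListQ DI C) *
            ∏ x ∈ C \ A, t (C.card + 1 + (E.card + 1) - rkF C x)) *
            (if m ∈ B then 1 else t (E.card + 1))
        else 0) *
          (∏ j ∈ (insert m E') \ B, (if j = m then 1 else t (cvalP E' j)))
      + (if A ⊆ C ∧ B ⊆ E' then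
          (1 - t (E.card + 1)) *
            (ttl t (E.card + C.card) DI.card (sListQ DI C) *
              ∏ x ∈ C \ A, t (C.card + 1 + E.card - rkF C x))
        else 0) *
          (∏ j ∈ (insert m E') \ B, (if j = m then 1 else t (cvalP E' j))) := by
    intro C hCp
    have hC : C ⊆ DI := Finset.mem_powerset.1 hCp
    have hsepC : ∀ x ∈ C, ∀ y ∈ insert m E', x < y := fun x hx => hsep x (hC hx)
    have hsepCE : ∀ x ∈ C, ∀ y ∈ E', x < y := fun x hx y hy =>
      hsepC x hx y (Finset.mem_insert_of_mem hy)
    congr 1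
    · by_cases hc : A ⊆ C
      · rw [if_pos hc, if_pos hc, wsplit t hsepC hc hB', mcoef t hE'gt hB',
          prodTermQ_eq_ttl t hC E.card 0 (by omega), hMcard, hE'card,
          show E.card + 1 - 0 = E.card + 1 from rfl]
        ring
      · rw [if_neg hc, if_neg hc, zero_mul]
    · by_cases hc : A ⊆ C ∧ B ⊆ E'
      · rw [if_pos hc, if_pos hc, wsplit t hsepCE hc.1 hc.2, ← mcoef2 t hE'gt hc.2,
          prodTermQ_eq_ttl t hC E.card 1 (by omega), hE'card,
          show E.card + 1 - 1 = E.card from rfl]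
        ring
      · rw [if_neg hc, if_neg hc, zero_mul]
  rw [Finset.sum_congr rfl hcoef]
  -- final scalar computation
  have hS : (∏ j ∈ DI \ A, t (cvalP DI j))
      = ∑ C ∈ DI.powerset,
          ((if A ⊆ C then
            (ttl t (E.card + 1 + C.card) DI.card (sListQ DI C) *
              ∏ x ∈ C \ A, t (C.card + 1 + (E.card + 1) - rkF C x)) *
              (if m ∈ B then 1 else t (E.card + 1))
          else 0)
          + (if A ⊆ C ∧ B ⊆ E' then
              (1 - t (E.card + 1)) *
                (ttl t (E.card + C.card) DI.card (sListQ DI C) *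
                  ∏ x ∈ C \ A, t (C.card + 1 + E.card - rkF C x))
            else 0)) := by
    by_cases hmB : m ∈ B
    · have hnBE : ¬ B ⊆ E' := fun h => hmE' (h hmB)
      rw [coreQ t (E.card + 1) DI A hA']
      refine Finset.sum_congr rfl fun C hC => ?_
      by_cases hc : A ⊆ C
      · rw [if_pos hc, if_pos hc, if_pos hmB, if_neg (fun h => hnBE h.2)]
        ring
      · rw [if_neg hc, if_neg hc, if_neg (fun h => hc h.1)]
        ring
    · have hBE : B ⊆ E' := by
        intro x hx
        rcases Finset.mem_insert.1 (hB' hx) with h | h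
        · exact absurd (h ▸ hx) hmB
        · exact h
      have hc1 := coreQ t (E.card + 1) DI A hA'
      have hc2 := coreQ t E.card DI A hA'
      have e1 : (∑ C ∈ DI.powerset,
          ((if A ⊆ C then
            (ttl t (E.card + 1 + C.card) DI.card (sListQ DI C) *
              ∏ x ∈ C \ A, t (C.card + 1 + (E.card + 1) - rkF C x)) *
              (if m ∈ B then 1 else t (E.card + 1))
          else 0)
          + (if A ⊆ C ∧ B ⊆ E' then
              (1 - t (E.card + 1)) *
                (ttl t (E.card + C.card) DI.card (sListQ DI C) *
                  ∏ x ∈ C \ A, t (C.card + 1 + E.card - rkF C x))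
            else 0)))
          = (∑ C ∈ DI.powerset,
              (if A ⊆ C then
                ttl t (E.card + 1 + C.card) DI.card (sListQ DI C) *
                  ∏ x ∈ C \ A, t (C.card + 1 + (E.card + 1) - rkF C x)
              else 0)) * t (E.card + 1)
            + (1 - t (E.card + 1)) *
              ∑ C ∈ DI.powerset,
                (if A ⊆ C then
                  ttl t (E.card + C.card) DI.card (sListQ DI C) *
                    ∏ x ∈ C \ A, t (C.card + 1 + E.card - rkF C x)
                else 0) := by
        rw [Finset.sum_add_distrib, Finset.sum_mul, Finset.mul_sum]
        congr 1
        · refine Finset.sum_congr rfl fun C hC => ?_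
          by_cases hc : A ⊆ C
          · rw [if_pos hc, if_pos hc, if_neg hmB]
          · rw [if_neg hc, if_neg hc, zero_mul]
        · refine Finset.sum_congr rfl fun C hC => ?_
          by_cases hc : A ⊆ C
          · rw [if_pos (show A ⊆ C ∧ B ⊆ E' from ⟨hc, hBE⟩), if_pos hc]
          · rw [if_neg (fun h => hc h.1), if_neg hc, mul_zero]
      rw [e1, ← hc1, ← hc2]
      ring
  rw [hS, Finset.sum_mul]
  refine Finset.sum_congr rfl fun C hC => ?_
  rw [add_mul]
end
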